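/- arXiv:1602.07887 — 9 statements merged into one kernel-verified Lean document; each statement's English description precedes it below -/
import Mathlib

section
/- Let E be a real inner product space, let ν ≥ 0 be an integer, and let π_0, π_1, …, π_ν be pairwise orthogonal nonzero elements of E. Let n ≥ 1, let W be a symmetric positive semidefinite real n×n matrix, and let f : Fin n → E. Define the quadratic functional J_W(f) = Σ_{i=1}^{n} Σ_{k=1}^{n} W_{ik} ⟨f_i, f_k⟩, and for each j define the vector w_j ∈ ℝ^n componentwise by (w_j)_i = ⟨f_i, π_j⟩. Then J_W(f) ≥ Σ_{j=0}^{ν} (1/‖π_j‖²) · w_jᵀ W w_j. -/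
open scoped RealInnerProductSpace
open Matrix

lemma aux_psd {E : Type*} [NormedAddCommGroup E] [InnerProductSpace ℝ E] {n : ℕ}
    {W : Matrix (Fin n) (Fin n) ℝ} (hW : W.PosSemidef) (x : Fin n → E) :
    0 ≤ ∑ i, ∑ k, W i k * ⟪x i, x k⟫ := by
  obtain ⟨B, rfl⟩ : ∃ B : Matrix (Fin n) (Fin n) ℝ, W = Bᴴ * B := by
    open scoped MatrixOrder in exact CStarAlgebra.nonneg_iff_eq_star_mul_self.mp hW.nonneg
  have expand : ∀ l, ⟪∑ i, B l i • x i, ∑ k, B l k • x k⟫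
      = ∑ i, ∑ k, B l i * B l k * ⟪x i, x k⟫ := by
    intro l
    rw [sum_inner]
    refine Finset.sum_congr rfl fun i _ => ?_
    rw [real_inner_smul_left, inner_sum, Finset.mul_sum]
    refine Finset.sum_congr rfl fun k _ => ?_
    rw [real_inner_smul_right]; ring
  have key : ∑ i, ∑ k, (Bᴴ * B) i k * ⟪x i, x k⟫
      = ∑ l, ⟪∑ i, B l i • x i, ∑ k, B l k • x k⟫ := by
    simp only [expand]
    calc ∑ i, ∑ k, (Bᴴ * B) i k * ⟪x i, x k⟫
        = ∑ i, ∑ k, ∑ l, B l i * B l k * ⟪x i, x k⟫ := by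
          refine Finset.sum_congr rfl fun i _ => Finset.sum_congr rfl fun k _ => ?_
          rw [Matrix.mul_apply, Finset.sum_mul]
          simp [Matrix.conjTranspose_apply]
      _ = ∑ i, ∑ l, ∑ k, B l i * B l k * ⟪x i, x k⟫ :=
          Finset.sum_congr rfl fun i _ => Finset.sum_comm
      _ = ∑ l, ∑ i, ∑ k, B l i * B l k * ⟪x i, x k⟫ := Finset.sum_comm
  rw [key]
  exact Finset.sum_nonneg fun l _ => real_inner_self_nonneg

/-- Bessel-type inequality (Lemma 1): for an orthogonal system of nonzero
vectors `π 0, …, π ν` in a real inner product space, a symmetric positive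
semidefinite matrix `W` and `f : Fin n → E`,
`J_W(f) = ∑ i k, W i k * ⟪f i, f k⟫ ≥ ∑ j, (1/‖π j‖²) · w_jᵀ W w_j`,
where `(w j) i = ⟪f i, π j⟫`. -/
theorem stmt_0 {E : Type*} [NormedAddCommGroup E] [InnerProductSpace ℝ E]
    (ν : ℕ) (π : Fin (ν + 1) → E)
    (hπorth : ∀ i j, i ≠ j → ⟪π i, π j⟫ = 0)
    (hπne : ∀ i, π i ≠ 0)
    (n : ℕ) (hn : 1 ≤ n)
    (W : Matrix (Fin n) (Fin n) ℝ) (hWsym : W.IsSymm)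
    (hWpsd : ∀ v : Fin n → ℝ, 0 ≤ v ⬝ᵥ W.mulVec v)
    (f : Fin n → E) :
    ∑ j : Fin (ν + 1), (1 / ‖π j‖ ^ 2) *
        ((fun i => ⟪f i, π j⟫) ⬝ᵥ W.mulVec (fun i => ⟪f i, π j⟫))
      ≤ ∑ i : Fin n, ∑ k : Fin n, W i k * ⟪f i, f k⟫ := by
  have hnorm : ∀ j, (‖π j‖ : ℝ) ^ 2 ≠ 0 := fun j =>
    pow_ne_zero 2 (norm_ne_zero_iff.mpr (hπne j))
  set p : Fin n → E := fun i => ∑ j, (⟪f i, π j⟫ / ‖π j‖ ^ 2) • π j with hp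
  set g : Fin n → E := fun i => f i - p i with hg
  -- g is orthogonal to each π j
  have hgπ : ∀ i j, ⟪g i, π j⟫ = 0 := by
    intro i j
    have hpπ : ⟪p i, π j⟫ = ⟪f i, π j⟫ := by
      rw [hp]
      simp only [sum_inner, real_inner_smul_left]
      rw [Finset.sum_eq_single j]
      · rw [real_inner_self_eq_norm_sq, div_mul_cancel₀ _ (hnorm j)]
      · intro b _ hb
        rw [hπorth b j hb, mul_zero]
      · simp
    simp [hg, inner_sub_left, hpπ]
  -- hence ⟪g i, g k⟫ = ⟪g i, f k⟫
  have hgg : ∀ i k, ⟪g i, g k⟫ = ⟪f i, f k⟫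
      - ∑ j, ⟪f i, π j⟫ / ‖π j‖ ^ 2 * ⟪π j, f k⟫ := by
    intro i k
    have h0 : ⟪g i, p k⟫ = 0 := by
      rw [hp]
      simp [inner_sum, real_inner_smul_right, hgπ i]
    have h1 : ⟪g i, g k⟫ = ⟪g i, f k⟫ := by
      rw [show g k = f k - p k from rfl, inner_sub_right, h0, sub_zero]
    rw [h1, hg]
    simp only [inner_sub_left, hp, sum_inner, real_inner_smul_left]
  -- W is PosSemidef
  have hW : W.PosSemidef := by
    constructor
    · ext i k
      simpa [Matrix.conjTranspose_apply] using (congrFun (congrFun hWsym k) i).symm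
    · intro x
      simpa [Finsupp.sum_fintype, dotProduct, mulVec, Finset.mul_sum, mul_assoc] using hWpsd x
  have hpos := aux_psd hW g
  simp only [hgg, mul_sub, Finset.sum_sub_distrib, sub_nonneg] at hpos
  refine le_trans (le_of_eq ?_) hpos
  -- algebraic rearrangement of the two triple sums
  simp only [dotProduct, Matrix.mulVec]
  calc ∑ j, 1 / ‖π j‖ ^ 2 * ∑ i, ⟪f i, π j⟫ * ∑ k, W i k * ⟪f k, π j⟫
      = ∑ j, ∑ i, ∑ k, W i k * (⟪f i, π j⟫ / ‖π j‖ ^ 2 * ⟪π j, f k⟫) := by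
        refine Finset.sum_congr rfl fun j _ => ?_
        rw [Finset.mul_sum]
        refine Finset.sum_congr rfl fun i _ => ?_
        rw [Finset.mul_sum, Finset.mul_sum]
        refine Finset.sum_congr rfl fun k _ => ?_
        rw [real_inner_comm (π j) (f k)]; ring
    _ = ∑ i, ∑ j, ∑ k, W i k * (⟪f i, π j⟫ / ‖π j‖ ^ 2 * ⟪π j, f k⟫) := Finset.sum_comm
    _ = ∑ i, ∑ k, ∑ j, W i k * (⟪f i, π j⟫ / ‖π j‖ ^ 2 * ⟪π j, f k⟫) :=
        Finset.sum_congr rfl fun i _ => Finset.sum_comm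
    _ = ∑ i, ∑ k, W i k * ∑ j, ⟪f i, π j⟫ / ‖π j‖ ^ 2 * ⟪π j, f k⟫ := by
        refine Finset.sum_congr rfl fun i _ => Finset.sum_congr rfl fun k _ => ?_
        rw [Finset.mul_sum]
end

section
/- For integers m ≥ 0, n ≥ 0 and 0 ≤ k ≤ n, the coefficient of x^k in the polynomial P_{m,n}(x) equals (-1)^{n+k} · C(n,k) · C(m+n+k, n). -/
open Polynomial

/-- The coefficient of `x^k` in `P m n` equals `(-1)^(n+k) · C(n,k) · C(m+n+k, n)`. -/
theorem stmt_4 (P : ℕ → ℕ → Polynomial ℝ)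
    (hP0 : ∀ m, P m 0 = 1)
    (hP : ∀ m n, 1 ≤ n →
      (X : Polynomial ℝ) ^ m * P m n
        = C (1 / (n.factorial : ℝ)) *
            derivative^[n] (X ^ (m + n) * (X - 1) ^ n))
    (m n k : ℕ) (hk : k ≤ n) :
    (P m n).coeff k
      = (-1 : ℝ) ^ (n + k) * (Nat.choose n k : ℝ) * (Nat.choose (m + n + k) n : ℝ) := by
  rcases Nat.eq_zero_or_pos n with rfl | hn
  · interval_cases k
    simp [hP0]
  · have h := hP m n hn
    have h1 : (P m n).coeff k = ((X : Polynomial ℝ) ^ m * P m n).coeff (k + m) := by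
      rw [coeff_X_pow_mul]
    rw [h1, h, coeff_C_mul, coeff_iterate_derivative]
    have h2 : ((X : Polynomial ℝ) ^ (m + n) * (X - 1) ^ n).coeff (k + m + n)
        = ((X - 1 : Polynomial ℝ) ^ n).coeff k := by
      have : k + m + n = k + (m + n) := by ring
      rw [this, coeff_X_pow_mul]
    rw [h2]
    have h3 : ((X - 1 : Polynomial ℝ) ^ n).coeff k = (-1 : ℝ) ^ (n - k) * n.choose k := by
      have : (X - 1 : Polynomial ℝ) = X + C (-1) := by
        simp [sub_eq_add_neg]
      rw [this, coeff_X_add_C_pow]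
    rw [h3]
    have h4 : (k + m + n).descFactorial n = n.factorial * (m + n + k).choose n := by
      rw [Nat.descFactorial_eq_factorial_mul_choose]
      congr 2 <;> ring
    rw [h4]
    have h5 : (-1 : ℝ) ^ (n - k) = (-1 : ℝ) ^ (n + k) := by
      have : n + k = (n - k) + 2 * k := by omega
      rw [this, pow_add, pow_mul]
      norm_num
    have hf : (n.factorial : ℝ) ≠ 0 := Nat.cast_ne_zero.mpr n.factorial_ne_zero
    rw [h5]
    push_cast
    field_simp
    ring
end

section
/- For every integer m ≥ 0 and all integers n ≠ k with n, k ≥ 0, the polynomials P_{m,n} and P_{m,k} are orthogonal with respect to the weight x^m on [0,1]: ∫_0^1 x^m · P_{m,n}(x) · P_{m,k}(x) dx = 0. -/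
open Polynomial MeasureTheory intervalIntegral

private lemma poly_intervalIntegrable (p : Polynomial ℝ) :
    IntervalIntegrable (fun x => p.eval x) volume 0 1 :=
  (p.continuous_aeval).intervalIntegrable 0 1

/-- Repeated integration by parts: if `f` and its first `n-1` derivatives vanish at `0` and `1`
and `q` has degree `< n`, then `∫₀¹ q · f⁽ⁿ⁾ = 0`. -/
private lemma key_ibp : ∀ n : ℕ, ∀ f q : Polynomial ℝ,
    (∀ j, j < n → (Polynomial.derivative^[j] f).eval (0:ℝ) = 0) →
    (∀ j, j < n → (Polynomial.derivative^[j] f).eval (1:ℝ) = 0) →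
    q.natDegree < n →
    ∫ x in (0:ℝ)..1, q.eval x * (Polynomial.derivative^[n] f).eval x = 0 := by
  intro n
  induction n with
  | zero => intro f q _ _ hq; exact absurd hq (Nat.not_lt_zero _)
  | succ n ih =>
    intro f q h0 h1 hq
    have hD : Polynomial.derivative^[n+1] f
        = Polynomial.derivative (Polynomial.derivative^[n] f) := by
      rw [Function.iterate_succ_apply']
    have ibp : ∫ x in (0:ℝ)..1, q.eval x * (Polynomial.derivative^[n+1] f).eval x
        = q.eval 1 * (Polynomial.derivative^[n] f).eval 1
          - q.eval 0 * (Polynomial.derivative^[n] f).eval 0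
          - ∫ x in (0:ℝ)..1,
              (Polynomial.derivative q).eval x * (Polynomial.derivative^[n] f).eval x := by
      have := intervalIntegral.integral_mul_deriv_eq_deriv_mul
        (a := (0:ℝ)) (b := 1)
        (u := fun x => q.eval x) (v := fun x => (Polynomial.derivative^[n] f).eval x)
        (u' := fun x => (Polynomial.derivative q).eval x)
        (v' := fun x => (Polynomial.derivative^[n+1] f).eval x)
        (fun x _ => q.hasDerivAt x)
        (fun x _ => by rw [hD]; exact (Polynomial.derivative^[n] f).hasDerivAt x)
        (poly_intervalIntegrable _) (poly_intervalIntegrable _)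
      simpa using this
    rw [ibp, h0 n (Nat.lt_succ_self n), h1 n (Nat.lt_succ_self n)]
    simp only [mul_zero, sub_zero, zero_sub, neg_eq_zero]
    by_cases hq0 : q.natDegree = 0
    · have : Polynomial.derivative q = 0 := by
        rw [Polynomial.eq_C_of_natDegree_eq_zero hq0, Polynomial.derivative_C]
      simp [this]
    · exact ih f (Polynomial.derivative q)
        (fun j hj => h0 j (hj.trans (Nat.lt_succ_self n)))
        (fun j hj => h1 j (hj.trans (Nat.lt_succ_self n)))
        (lt_of_lt_of_le (Polynomial.natDegree_derivative_lt hq0) (Nat.lt_succ_iff.mp hq))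

/-- If `(X - C a)^N` divides `f`, then the first `N-1` derivatives of `f` vanish at `a`. -/
private lemma eval_iterate_deriv_zero {f : Polynomial ℝ} {a : ℝ} {N : ℕ}
    (hdvd : (X - C a) ^ N ∣ f) {j : ℕ} (hj : j < N) :
    (Polynomial.derivative^[j] f).eval a = 0 := by
  have h := Polynomial.pow_sub_dvd_iterate_derivative_of_pow_dvd j hdvd
  have h1 : (X - C a) ∣ Polynomial.derivative^[j] f := by
    refine dvd_trans ?_ h
    exact dvd_pow_self _ (Nat.sub_ne_zero_of_lt hj)
  exact (Polynomial.dvd_iff_isRoot.mp h1)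

/-- Degree bound: `natDegree (P m k) ≤ k`. -/
private lemma deg_bound (P : ℕ → ℕ → Polynomial ℝ)
    (hP0 : ∀ m, P m 0 = 1)
    (hP : ∀ m n, 1 ≤ n →
      (X : Polynomial ℝ) ^ m * P m n
        = C (1 / (n.factorial : ℝ)) *
            Polynomial.derivative^[n] (X ^ (m + n) * (X - 1) ^ n))
    (m k : ℕ) : (P m k).natDegree ≤ k := by
  rcases Nat.eq_zero_or_pos k with rfl | hk
  · simp [hP0]
  by_cases hz : P m k = 0
  · simp [hz]
  have heq := hP m k hk
  have h2 : (((X : Polynomial ℝ) - 1) ^ k).natDegree ≤ k := by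
    refine le_trans (Polynomial.natDegree_pow_le) ?_
    have h3 : ((X : Polynomial ℝ) - 1).natDegree ≤ 1 :=
      le_trans (Polynomial.natDegree_sub_le _ _) (by simp)
    calc k * ((X : Polynomial ℝ) - 1).natDegree ≤ k * 1 := Nat.mul_le_mul_left k h3
      _ = k := Nat.mul_one k
  have h1 : ((X : Polynomial ℝ) ^ (m + k) * (X - 1) ^ k).natDegree ≤ m + k + k :=
    le_trans (Polynomial.natDegree_mul_le) (Nat.add_le_add (by simp) h2)
  have hrd : (Polynomial.derivative^[k]
      ((X : Polynomial ℝ) ^ (m + k) * (X - 1) ^ k)).natDegree ≤ m + k := by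
    have h4 := Polynomial.natDegree_iterate_derivative
      ((X : Polynomial ℝ) ^ (m + k) * (X - 1) ^ k) k
    omega
  have hlhs : ((X : Polynomial ℝ) ^ m * P m k).natDegree = m + (P m k).natDegree := by
    rw [Polynomial.natDegree_mul (pow_ne_zero _ Polynomial.X_ne_zero) hz, Polynomial.natDegree_X_pow]
  have hrhs : ((X : Polynomial ℝ) ^ m * P m k).natDegree ≤ m + k := by
    rw [heq]
    refine le_trans (Polynomial.natDegree_mul_le) ?_
    simpa using hrd
  omega

private lemma main_aux (P : ℕ → ℕ → Polynomial ℝ)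
    (hP0 : ∀ m, P m 0 = 1)
    (hP : ∀ m n, 1 ≤ n →
      (X : Polynomial ℝ) ^ m * P m n
        = C (1 / (n.factorial : ℝ)) *
            Polynomial.derivative^[n] (X ^ (m + n) * (X - 1) ^ n))
    (m n k : ℕ) (hkn : k < n) :
    ∫ x in (0:ℝ)..1, x ^ m * ((P m n).eval x * (P m k).eval x) = 0 := by
  set f : Polynomial ℝ := X ^ (m + n) * (X - 1) ^ n with hf
  have heq := hP m n (by omega)
  have hinteg : ∀ x : ℝ, x ^ m * ((P m n).eval x * (P m k).eval x)
      = (1 / (n.factorial : ℝ)) *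
          ((P m k).eval x * (Polynomial.derivative^[n] f).eval x) := by
    intro x
    have : ((X : Polynomial ℝ) ^ m * P m n).eval x
        = (C (1 / (n.factorial : ℝ)) *
            Polynomial.derivative^[n] f).eval x := by rw [heq]
    simp only [Polynomial.eval_mul, Polynomial.eval_pow, Polynomial.eval_X,
      Polynomial.eval_C] at this
    calc x ^ m * ((P m n).eval x * (P m k).eval x)
        = (x ^ m * (P m n).eval x) * (P m k).eval x := by ring
      _ = ((1 / (n.factorial : ℝ)) * (Polynomial.derivative^[n] f).eval x)
            * (P m k).eval x := by rw [this]
      _ = (1 / (n.factorial : ℝ)) *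
            ((P m k).eval x * (Polynomial.derivative^[n] f).eval x) := by ring
  simp_rw [hinteg]
  rw [intervalIntegral.integral_const_mul]
  have h0 : ∀ j, j < n → (Polynomial.derivative^[j] f).eval (0:ℝ) = 0 := by
    intro j hj
    refine eval_iterate_deriv_zero (a := (0:ℝ)) ?_ (lt_of_lt_of_le hj (Nat.le_add_left n m))
    simp only [map_zero, sub_zero, hf]
    exact dvd_mul_right _ _
  have h1 : ∀ j, j < n → (Polynomial.derivative^[j] f).eval (1:ℝ) = 0 := by
    intro j hj
    refine eval_iterate_deriv_zero (a := (1:ℝ)) ?_ hj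
    simp only [map_one, hf]
    exact dvd_mul_left _ _
  rw [key_ibp n f (P m k) h0 h1 (lt_of_le_of_lt (deg_bound P hP0 hP m k) hkn)]
  ring

/-- Orthogonality of the polynomials `P m n` with respect to the weight `x^m`
on `[0,1]`. -/
theorem stmt_5 (P : ℕ → ℕ → Polynomial ℝ)
    (hP0 : ∀ m, P m 0 = 1)
    (hP : ∀ m n, 1 ≤ n →
      (X : Polynomial ℝ) ^ m * P m n
        = C (1 / (n.factorial : ℝ)) *
            derivative^[n] (X ^ (m + n) * (X - 1) ^ n))
    (m n k : ℕ) (hnk : n ≠ k) :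
    ∫ x in (0:ℝ)..1, x ^ m * ((P m n).eval x * (P m k).eval x) = 0 := by
  rcases lt_or_gt_of_ne hnk with h | h
  · have := main_aux P hP0 hP m k n h
    simpa [mul_comm] using this
  · exact main_aux P hP0 hP m n k h
end

section
/- Let m ≥ 0 be an integer and a < b real numbers, and define p_{m,n}(t) = P_{m,n}((t-a)/(b-a)). Then for all integers n ≠ k with n, k ≥ 0, ∫_a^b ((t-a)/(b-a))^m · p_{m,n}(t) · p_{m,k}(t) dt = 0; moreover ∫_a^b ((t-a)/(b-a))^m · p_{m,n}(t)² dt = (b-a)/(m+2n+1), p_{m,n}(a) = (-1)^n · C(m+n,n), and p_{m,n}(b) = 1. -/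
open Polynomial MeasureTheory intervalIntegral

namespace Stmt9Aux

/-- Integral of a polynomial over `[0,1]`. -/
noncomputable def I (q : Polynomial ℝ) : ℝ := ∫ x in (0:ℝ)..1, q.eval x

lemma intInt (q : Polynomial ℝ) (a b : ℝ) :
    IntervalIntegrable (fun x => q.eval x) volume a b :=
  q.continuous.intervalIntegrable _ _

lemma I_add (u v : Polynomial ℝ) : I (u + v) = I u + I v := by
  unfold I
  simp only [eval_add]
  exact intervalIntegral.integral_add (intInt u 0 1) (intInt v 0 1)

lemma I_Cmul (c : ℝ) (u : Polynomial ℝ) : I (C c * u) = c * I u := by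
  unfold I
  simp only [eval_mul, eval_C]
  exact intervalIntegral.integral_const_mul c _

/-- Integration by parts for polynomials on `[0,1]`. -/
lemma ibp (u v : Polynomial ℝ) :
    I (derivative u * v)
      = (u.eval 1 * v.eval 1 - u.eval 0 * v.eval 0) - I (u * derivative v) := by
  have h := intervalIntegral.integral_eq_sub_of_hasDerivAt
    (f := fun x => (u * v).eval x) (f' := fun x => ((derivative (u * v)).eval x))
    (a := 0) (b := 1) (fun x _ => (u * v).hasDerivAt x) (intInt _ 0 1)
  have h2 : I (derivative u * v) + I (u * derivative v)
      = (u * v).eval 1 - (u * v).eval 0 := by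
    rw [← I_add]
    rw [show derivative u * v + u * derivative v = derivative (u * v) by
      rw [derivative_mul]]
    exact h
  simp only [eval_mul] at h2
  linarith

/-- Structure of iterated derivatives of `X^(m+n)(X-1)^n`. -/
lemma factor (m n : ℕ) : ∀ k, k ≤ n → ∃ g : Polynomial ℝ,
    derivative^[k] (X ^ (m + n) * (X - 1) ^ n)
      = X ^ (m + n - k) * (X - 1) ^ (n - k) * g := by
  intro k
  induction k with
  | zero => intro _; exact ⟨1, by simp⟩
  | succ k ih =>
    intro hk
    obtain ⟨g, hg⟩ := ih (Nat.le_of_succ_le hk)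
    set s := m + n - (k + 1) with hs
    set r := n - (k + 1) with hr
    have h1 : m + n - k = s + 1 := by omega
    have h2 : n - k = r + 1 := by omega
    refine ⟨C ((s:ℝ) + 1) * (X - 1) * g + C ((r:ℝ) + 1) * X * g
      + X * (X - 1) * derivative g, ?_⟩
    rw [Function.iterate_succ_apply', hg, h1, h2]
    simp only [derivative_mul, derivative_pow, derivative_X, derivative_sub,
      derivative_one, Nat.cast_add, Nat.cast_one, Nat.add_sub_cancel]
    ring

lemma vanish (m n k : ℕ) (hk : k < n) :
    (derivative^[k] (X ^ (m + n) * (X - 1) ^ n) : Polynomial ℝ).eval 0 = 0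
    ∧ (derivative^[k] (X ^ (m + n) * (X - 1) ^ n) : Polynomial ℝ).eval 1 = 0 := by
  obtain ⟨g, hg⟩ := factor m n k hk.le
  have h1 : m + n - k ≠ 0 := by omega
  have h2 : n - k ≠ 0 := by omega
  constructor <;> simp [hg, zero_pow, h1, h2]

/-- Repeated integration by parts. -/
lemma shift (m n : ℕ) (q : Polynomial ℝ) : ∀ j, j ≤ n →
    I (derivative^[n] (X ^ (m + n) * (X - 1) ^ n) * q)
      = (-1 : ℝ) ^ j *
          I (derivative^[n - j] (X ^ (m + n) * (X - 1) ^ n) * derivative^[j] q) := by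
  intro j
  induction j with
  | zero => intro _; simp
  | succ j ih =>
    intro hj
    rw [ih (Nat.le_of_succ_le hj)]
    have h1 : n - j = (n - (j + 1)) + 1 := by omega
    have hv := vanish m n (n - (j+1)) (by omega)
    rw [h1]
    simp only [Function.iterate_succ_apply']
    rw [ibp, hv.1, hv.2]
    ring

/-- The Beta-type integral `∫₀¹ x^s (x-1)^r dx`. -/
lemma beta (r : ℕ) : ∀ s : ℕ, I (X ^ s * (X - 1) ^ r)
    = (-1 : ℝ) ^ r * ((s.factorial : ℝ) * r.factorial) / (s + r + 1).factorial := by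
  induction r with
  | zero =>
    intro s
    unfold I
    simp only [pow_zero, mul_one, eval_pow, eval_X]
    rw [integral_pow]
    rw [Nat.factorial_succ]
    have : (s.factorial : ℝ) ≠ 0 := Nat.cast_ne_zero.mpr s.factorial_ne_zero
    push_cast
    field_simp
    simp
  | succ r ih =>
    intro s
    have h := ibp (X ^ (s + 1)) ((X - 1) ^ (r + 1))
    have hd1 : derivative ((X : Polynomial ℝ) ^ (s + 1)) = C ((s : ℝ) + 1) * X ^ s := by
      rw [derivative_X_pow]; push_cast; simp
    have hd2 : derivative (((X : Polynomial ℝ) - 1) ^ (r + 1))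
        = C ((r : ℝ) + 1) * (X - 1) ^ r := by
      simp [derivative_pow]
    rw [hd1, hd2] at h
    simp only [eval_pow, eval_X, eval_sub, eval_one] at h
    rw [mul_assoc, I_Cmul] at h
    have hswap : (X : Polynomial ℝ) ^ (s + 1) * (C ((r : ℝ) + 1) * (X - 1) ^ r)
        = C ((r : ℝ) + 1) * (X ^ (s + 1) * (X - 1) ^ r) := by ring
    rw [hswap, I_Cmul, ih (s + 1)] at h
    simp only [one_pow, zero_pow (Nat.succ_ne_zero s), sub_self, zero_pow (Nat.succ_ne_zero r),
      mul_zero, zero_mul, sub_zero, zero_sub, mul_one, one_mul] at h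
    have hs1 : ((s:ℝ) + 1) ≠ 0 := by positivity
    have heq : I (X ^ s * (X - 1) ^ (r + 1))
        = -(((r:ℝ) + 1) * ((-1) ^ r * (((s+1).factorial : ℝ) * r.factorial)
            / ((s + 1 + r + 1).factorial))) / ((s:ℝ) + 1) := by
      field_simp at h ⊢
      linarith
    rw [heq]
    have h2 : ((s + (r+1) + 1).factorial : ℝ) = ((s + 1 + r + 1).factorial : ℝ) := by
      norm_num; ring_nf
    rw [h2]
    have h3 : (((s+1).factorial : ℝ)) = ((s:ℝ)+1) * s.factorial := by
      rw [Nat.factorial_succ]; push_cast; ring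
    have h4 : (((r+1).factorial : ℝ)) = ((r:ℝ)+1) * r.factorial := by
      rw [Nat.factorial_succ]; push_cast; ring
    rw [h3, h4]
    have h5 : ((s + 1 + r + 1).factorial : ℝ) ≠ 0 := Nat.cast_ne_zero.mpr (Nat.factorial_ne_zero _)
    field_simp
    ring

lemma coeff_f_top (m n : ℕ) :
    ((X : Polynomial ℝ) ^ (m + n) * (X - 1) ^ n).coeff (n + (m + n)) = 1 := by
  rw [coeff_X_pow_mul]
  have h : ((X : Polynomial ℝ) - 1) = X - C 1 := by simp
  rw [h]
  have hm : ((X : Polynomial ℝ) - C 1).Monic := monic_X_sub_C 1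
  have := (hm.pow n).coeff_natDegree
  rwa [natDegree_pow, natDegree_X_sub_C, mul_one] at this

lemma coeff_f_mn (m n : ℕ) :
    ((X : Polynomial ℝ) ^ (m + n) * (X - 1) ^ n).coeff (0 + (m + n)) = (-1) ^ n := by
  rw [coeff_X_pow_mul, coeff_zero_eq_eval_zero]
  simp

lemma deg_f (m n : ℕ) :
    ((X : Polynomial ℝ) ^ (m + n) * (X - 1) ^ n).natDegree ≤ m + 2 * n := by
  refine le_trans (natDegree_mul_le) ?_
  have h1 : ((X : Polynomial ℝ) ^ (m + n)).natDegree ≤ m + n := natDegree_X_pow_le _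
  have h2 : (((X : Polynomial ℝ) - 1) ^ n).natDegree ≤ n := by
    refine le_trans (natDegree_pow_le) ?_
    have : ((X : Polynomial ℝ) - 1).natDegree ≤ 1 := by
      simpa using natDegree_X_sub_C_le (1 : ℝ)
    nlinarith
  omega

lemma deg_df (m n : ℕ) :
    (derivative^[n] ((X : Polynomial ℝ) ^ (m + n) * (X - 1) ^ n)).natDegree ≤ m + n := by
  refine le_trans (natDegree_iterate_derivative _ _) ?_
  have := deg_f m n
  omega

lemma df_eval1 (m n : ℕ) :
    (derivative^[n] ((X : Polynomial ℝ) ^ (m + n) * (X - 1) ^ n)).eval 1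
      = (n.factorial : ℝ) := by
  have h1 : ((X : Polynomial ℝ) - 1) = X - C 1 := by simp
  rw [h1, iterate_derivative_mul]
  rw [eval_finset_sum]
  rw [Finset.sum_eq_single n]
  · rw [iterate_derivative_X_sub_pow_self]
    simp
  · intro k hk hkn
    have hklt : k < n := by
      simp only [Finset.mem_range] at hk; omega
    rw [iterate_derivative_X_sub_pow]
    simp [zero_pow (by omega : n - k ≠ 0)]
  · intro h; simp at h

section
variable (P : ℕ → ℕ → Polynomial ℝ)
  (hP0 : ∀ m, P m 0 = 1)
  (hP : ∀ m n, 1 ≤ n →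
      (X : Polynomial ℝ) ^ m * P m n
        = C (1 / (n.factorial : ℝ)) *
            derivative^[n] (X ^ (m + n) * (X - 1) ^ n))

include hP in
lemma Pdeg (m n : ℕ) (hn : 1 ≤ n) : (P m n).natDegree ≤ n := by
  by_cases h : P m n = 0
  · simp [h]
  have hdeg : ((X : Polynomial ℝ) ^ m * P m n).natDegree ≤ m + n := by
    rw [hP m n hn]
    refine le_trans natDegree_mul_le ?_
    simpa using deg_df m n
  rw [natDegree_mul (pow_ne_zero m X_ne_zero) h, natDegree_X_pow] at hdeg
  omega

include hP in
lemma Pcoeffn (m n : ℕ) (hn : 1 ≤ n) :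
    (P m n).coeff n = ((m + 2 * n).descFactorial n : ℝ) / (n.factorial : ℝ) := by
  have h := coeff_X_pow_mul (P m n) m n
  rw [hP m n hn] at h
  rw [coeff_C_mul, coeff_iterate_derivative] at h
  rw [show n + m + n = n + (m + n) by omega, coeff_f_top m n] at h
  rw [← h, show n + (m + n) = m + 2 * n by omega]
  simp [nsmul_eq_mul]
  ring

include hP in
lemma Pcoeff0 (m n : ℕ) (hn : 1 ≤ n) :
    (P m n).coeff 0 = (-1 : ℝ) ^ n * (((m + n).descFactorial n : ℝ) / (n.factorial : ℝ)) := by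
  have h := coeff_X_pow_mul (P m n) m 0
  rw [hP m n hn] at h
  rw [coeff_C_mul, coeff_iterate_derivative] at h
  rw [show 0 + m + n = 0 + (m + n) by omega, coeff_f_mn m n] at h
  rw [← h, show (0 : ℕ) + (m + n) = m + n by omega]
  simp [nsmul_eq_mul]
  ring

include hP in
lemma Peval1 (m n : ℕ) (hn : 1 ≤ n) : (P m n).eval 1 = 1 := by
  have h := congrArg (eval (1:ℝ)) (hP m n hn)
  simp only [eval_mul, eval_pow, eval_X, one_pow, one_mul, eval_C] at h
  rw [df_eval1 m n] at h
  rw [h]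
  have : (n.factorial : ℝ) ≠ 0 := Nat.cast_ne_zero.mpr n.factorial_ne_zero
  field_simp

include hP in
lemma core (m n : ℕ) (hn : 1 ≤ n) (q : Polynomial ℝ) :
    I (X ^ m * P m n * q)
      = (-1 : ℝ) ^ n / (n.factorial : ℝ)
          * I (X ^ (m + n) * (X - 1) ^ n * derivative^[n] q) := by
  have h : (X : Polynomial ℝ) ^ m * P m n * q
      = C (1 / (n.factorial : ℝ)) * (derivative^[n] (X ^ (m + n) * (X - 1) ^ n) * q) := by
    rw [hP m n hn]; ring
  rw [h, I_Cmul, shift m n q n le_rfl, Nat.sub_self]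
  simp only [Function.iterate_zero, id_eq]
  ring

include hP hP0 in
lemma Porth (m n k : ℕ) (hk : k < n) : I (X ^ m * (P m n * P m k)) = 0 := by
  have hn : 1 ≤ n := by omega
  rw [← mul_assoc, core P hP m n hn (P m k)]
  have hdz : derivative^[n] (P m k) = 0 := by
    apply iterate_derivative_eq_zero
    rcases Nat.eq_zero_or_pos k with h0 | hpos
    · subst h0; rw [hP0]; simpa using hk
    · exact lt_of_le_of_lt (Pdeg P hP m k hpos) hk
  rw [hdz, mul_zero]
  simp [I]

include hP hP0 in
lemma Pnorm (m n : ℕ) : I (X ^ m * (P m n * P m n)) = 1 / ((m : ℝ) + 2 * n + 1) := by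
  rcases Nat.eq_zero_or_pos n with h0 | hn
  · subst h0
    rw [hP0]
    simp only [mul_one]
    unfold I
    simp only [eval_pow, eval_X]
    rw [integral_pow]
    push_cast
    norm_num
  · rw [← mul_assoc, core P hP m n hn (P m n)]
    have hdeg : (derivative^[n] (P m n)).natDegree = 0 := by
      have := natDegree_iterate_derivative (P m n) n
      have := Pdeg P hP m n hn
      omega
    have hC : derivative^[n] (P m n) = C ((n.factorial : ℝ) * (P m n).coeff n) := by
      rw [eq_C_of_natDegree_le_zero hdeg.le]
      congr 1
      rw [coeff_iterate_derivative, zero_add, Nat.descFactorial_self, nsmul_eq_mul]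
    rw [hC, Pcoeffn P hP m n hn]
    rw [mul_comm ((X : Polynomial ℝ) ^ (m + n) * (X - 1) ^ n) _, I_Cmul, beta n (m + n)]
    have hfac : ((m + n).factorial : ℝ) * ((m + 2 * n).descFactorial n : ℝ)
        = ((m + 2 * n).factorial : ℝ) := by
      rw [← Nat.cast_mul]
      congr 1
      have := Nat.factorial_mul_descFactorial (show n ≤ m + 2 * n by omega)
      rwa [show m + 2 * n - n = m + n by omega] at this
    have h1 : ((m + 2 * n + 1).factorial : ℝ)
        = ((m : ℝ) + 2 * n + 1) * ((m + 2 * n).factorial : ℝ) := by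
      rw [Nat.factorial_succ]; push_cast; ring
    have hne1 : (n.factorial : ℝ) ≠ 0 := Nat.cast_ne_zero.mpr n.factorial_ne_zero
    have hne2 : ((m + 2 * n).factorial : ℝ) ≠ 0 := Nat.cast_ne_zero.mpr (Nat.factorial_ne_zero _)
    have hne3 : ((m : ℝ) + 2 * n + 1) ≠ 0 := by positivity
    have harg : m + n + n + 1 = m + 2 * n + 1 := by omega
    rw [harg, h1]
    have hsq : ((-1:ℝ))^n * (-1)^n = 1 := by
      rw [← pow_add, ← two_mul, pow_mul]; norm_num
    field_simp
    linear_combination (↑((m + 2*n).descFactorial n) * ↑(m+n).factorial) * hsq + hfac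

end

lemma cov (a b : ℝ) (hab : a < b) (q : Polynomial ℝ) :
    ∫ t in a..b, q.eval ((t - a) / (b - a)) = (b - a) * I q := by
  have hba : b - a ≠ 0 := sub_ne_zero.mpr hab.ne'
  have h1 : ∫ t in a..b, q.eval ((t - a) / (b - a))
      = ∫ x in a - a..b - a, q.eval (x / (b - a)) :=
    intervalIntegral.integral_comp_sub_right (fun x => q.eval (x / (b - a))) a
  rw [h1, sub_self]
  have h2 := intervalIntegral.integral_comp_div (a := 0) (b := b - a) (c := b - a)
    (f := fun x => q.eval x) hba
  rw [h2, zero_div, div_self hba]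
  simp [I, smul_eq_mul]

end Stmt9Aux

open Stmt9Aux

/-- Properties of the shifted polynomials `p_{m,n}(t) = P_{m,n}((t-a)/(b-a))` on
`[a,b]`: orthogonality with weight `((t-a)/(b-a))^m`, squared norm
`(b-a)/(m+2n+1)`, and endpoint values. -/
theorem stmt_9 (P : ℕ → ℕ → Polynomial ℝ)
    (hP0 : ∀ m, P m 0 = 1)
    (hP : ∀ m n, 1 ≤ n →
      (X : Polynomial ℝ) ^ m * P m n
        = C (1 / (n.factorial : ℝ)) *
            derivative^[n] (X ^ (m + n) * (X - 1) ^ n))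
    (m : ℕ) (a b : ℝ) (hab : a < b)
    (p : ℕ → ℝ → ℝ) (hp : ∀ n t, p n t = (P m n).eval ((t - a) / (b - a))) :
    (∀ n k : ℕ, n ≠ k →
        ∫ t in a..b, ((t - a) / (b - a)) ^ m * (p n t * p k t) = 0)
    ∧ (∀ n : ℕ,
        ∫ t in a..b, ((t - a) / (b - a)) ^ m * p n t ^ 2
          = (b - a) / ((m : ℝ) + 2 * n + 1))
    ∧ (∀ n : ℕ, p n a = (-1 : ℝ) ^ n * (Nat.choose (m + n) n : ℝ))
    ∧ (∀ n : ℕ, p n b = 1) := by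
  have hba : b - a ≠ 0 := sub_ne_zero.mpr hab.ne'
  refine ⟨?_, ?_, ?_, ?_⟩
  · intro n k hne
    have key : ∀ t : ℝ, ((t - a) / (b - a)) ^ m * (p n t * p k t)
        = ((X : Polynomial ℝ) ^ m * (P m n * P m k)).eval ((t - a) / (b - a)) := by
      intro t
      simp only [hp, eval_mul, eval_pow, eval_X]
    simp only [key]
    rw [cov a b hab]
    rcases hne.lt_or_gt with h | h
    · rw [show P m n * P m k = P m k * P m n from mul_comm _ _,
        Porth P hP0 hP m k n h, mul_zero]
    · rw [Porth P hP0 hP m n k h, mul_zero]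
  · intro n
    have key : ∀ t : ℝ, ((t - a) / (b - a)) ^ m * p n t ^ 2
        = ((X : Polynomial ℝ) ^ m * (P m n * P m n)).eval ((t - a) / (b - a)) := by
      intro t
      simp only [hp, eval_mul, eval_pow, eval_X]
      ring
    simp only [key]
    rw [cov a b hab, Pnorm P hP0 hP m n, mul_one_div]
  · intro n
    rw [hp, sub_self, zero_div]
    rcases Nat.eq_zero_or_pos n with h0 | hn
    · subst h0; simp [hP0]
    · rw [← coeff_zero_eq_eval_zero, Pcoeff0 P hP m n hn]
      congr 1
      rw [Nat.descFactorial_eq_factorial_mul_choose]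
      have : (n.factorial : ℝ) ≠ 0 := Nat.cast_ne_zero.mpr n.factorial_ne_zero
      push_cast
      field_simp
  · intro n
    rw [hp, div_self hba]
    rcases Nat.eq_zero_or_pos n with h0 | hn
    · subst h0; simp [hP0]
    · exact Peval1 P hP m n hn
end

section
/- Let n ≥ 1 and let W be a symmetric positive semidefinite real n×n matrix, and let m ≥ 0 and ν ≥ 0 be integers. Let a < b be real numbers and f : [a,b] → ℝ^n be continuous. For 0 ≤ j ≤ ν define w_{m,j} = ∫_a^b ((s-a)/(b-a))^m · P_{m,j}((s-a)/(b-a)) · f(s) ds ∈ ℝ^n. Then ∫_a^b ((s-a)/(b-a))^m · f(s)ᵀ W f(s) ds ≥ (1/(b-a)) · Σ_{j=0}^{ν} (m+2j+1) · w_{m,j}ᵀ W w_{m,j}. -/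
open Polynomial Matrix MeasureTheory intervalIntegral

lemma poly_parts (p q : Polynomial ℝ) :
    ∫ x in (0:ℝ)..1, (derivative p).eval x * q.eval x
      = p.eval 1 * q.eval 1 - p.eval 0 * q.eval 0
        - ∫ x in (0:ℝ)..1, p.eval x * (derivative q).eval x := by
  have h := integral_deriv_mul_eq_sub (a := (0:ℝ)) (b := 1)
    (u := fun x => p.eval x) (v := fun x => q.eval x)
    (u' := fun x => (derivative p).eval x) (v' := fun x => (derivative q).eval x)
    (fun x _ => p.hasDerivAt x) (fun x _ => q.hasDerivAt x)
    ((Polynomial.continuous _).continuousOn.intervalIntegrable)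
    ((Polynomial.continuous _).continuousOn.intervalIntegrable)
  rw [integral_add (f := fun x => (derivative p).eval x * q.eval x)
    (g := fun x => p.eval x * (derivative q).eval x)
    (((Polynomial.continuous _).mul (Polynomial.continuous _)).continuousOn.intervalIntegrable)
    (((Polynomial.continuous _).mul (Polynomial.continuous _)).continuousOn.intervalIntegrable)] at h
  linarith

lemma beta_int (p q : ℕ) :
    ∫ x in (0:ℝ)..1, x ^ p * (x - 1) ^ q
      = (-1) ^ q * (p.factorial * q.factorial / ((p + q + 1).factorial)) := by
  induction q generalizing p with
  | zero =>
      have h1 : ((p + 0 + 1).factorial : ℝ) = (p+1) * p.factorial := by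
        simp [Nat.factorial_succ]
      simp only [pow_zero, mul_one, integral_pow, one_pow, Nat.factorial_zero, Nat.cast_one, h1]
      have : (p.factorial : ℝ) ≠ 0 := Nat.cast_ne_zero.2 p.factorial_ne_zero
      field_simp
      simp
  | succ q ih =>
      have hp1 : ((p:ℝ)+1) ≠ 0 := by positivity
      have key := poly_parts (C (((p:ℝ)+1)⁻¹) * X ^ (p+1)) ((X - 1) ^ (q+1))
      have hone : (((p:ℝ)+1)⁻¹ * ((p+1 : ℕ):ℝ)) = 1 := by
        push_cast; rw [inv_mul_cancel₀ hp1]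
      have hd : derivative (C (((p:ℝ)+1)⁻¹) * X ^ (p+1)) = X ^ p := by
        rw [derivative_C_mul, derivative_X_pow, Nat.add_sub_cancel, ← mul_assoc, ← C_mul, hone,
          _root_.map_one, one_mul]
      rw [hd] at key
      have hd2 : derivative ((X - 1 : Polynomial ℝ) ^ (q+1)) = C ((q:ℝ)+1) * (X-1)^q := by
        simp [derivative_pow]
      rw [hd2] at key
      simp only [eval_mul, eval_pow, eval_sub, eval_X, eval_one, eval_C, sub_self, one_pow,
        zero_pow (Nat.succ_ne_zero q), mul_zero, zero_mul, sub_zero, zero_sub, zero_pow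
        (Nat.succ_ne_zero p), zero_mul, mul_zero, neg_zero] at key
      have hre : ∀ x : ℝ, ((p:ℝ)+1)⁻¹ * x ^ (p+1) * (((q:ℝ)+1) * (x-1)^q)
          = (((p:ℝ)+1)⁻¹ * ((q:ℝ)+1)) * (x ^ (p+1) * (x-1)^q) := by intro x; ring
      rw [show (fun x : ℝ => ((p:ℝ)+1)⁻¹ * x ^ (p+1) * (((q:ℝ)+1) * (x-1)^q))
        = (fun x : ℝ => (((p:ℝ)+1)⁻¹ * ((q:ℝ)+1)) * (x ^ (p+1) * (x-1)^q)) from funext hre] at key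
      rw [intervalIntegral.integral_const_mul, ih (p+1)] at key
      rw [key]
      have e1 : p + 1 + q + 1 = p + (q+1) + 1 := by ring
      rw [e1]
      have h2 : ((p + (q+1) + 1).factorial : ℝ) ≠ 0 := Nat.cast_ne_zero.2 (Nat.factorial_ne_zero _)
      rw [Nat.factorial_succ (p), Nat.factorial_succ (q)]
      push_cast
      field_simp
      ring

lemma deriv_factor (l : ℕ) : ∀ p q : ℕ,
    ∃ S : Polynomial ℝ, derivative^[l] ((X:Polynomial ℝ) ^ (p + l) * (X - 1) ^ (q + l))
      = X ^ p * (X - 1) ^ q * S := by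
  induction l with
  | zero => exact fun p q => ⟨1, by simp⟩
  | succ l ih =>
    intro p q
    obtain ⟨S, hS⟩ := ih (p+1) (q+1)
    refine ⟨C (((p+1:ℕ)):ℝ) * (X-1) * S + C (((q+1:ℕ)):ℝ) * X * S + X * (X-1) * derivative S, ?_⟩
    rw [show p + (l+1) = (p+1)+l from by ring, show q+(l+1) = (q+1)+l from by ring,
      Function.iterate_succ_apply', hS]
    rw [derivative_mul, derivative_mul, derivative_X_pow, derivative_pow, Nat.add_sub_cancel,
      Nat.add_sub_cancel, derivative_sub, derivative_X, derivative_one, sub_zero, mul_one]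
    ring

lemma deriv_Q_bdry (m j l : ℕ) (hl : l < j) :
    (derivative^[l] ((X:Polynomial ℝ)^(m+j) * (X-1)^j)).eval 0 = 0 ∧
    (derivative^[l] ((X:Polynomial ℝ)^(m+j) * (X-1)^j)).eval 1 = 0 := by
  obtain ⟨d, rfl⟩ : ∃ d, j = l + d + 1 := ⟨j - l - 1, by omega⟩
  obtain ⟨S, hS⟩ := deriv_factor l (m+d+1) (d+1)
  rw [show m + (l + d + 1) = (m+d+1) + l from by ring, show l + d + 1 = (d+1) + l from by ring, hS]
  constructor <;> simp [zero_pow (Nat.succ_ne_zero _)]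

lemma iter_parts (j m : ℕ) (R : Polynomial ℝ) : ∀ i, i ≤ j →
    ∫ x in (0:ℝ)..1, (derivative^[j] ((X:Polynomial ℝ)^(m+j)*(X-1)^j)).eval x * R.eval x
      = (-1)^i * ∫ x in (0:ℝ)..1,
          (derivative^[j-i] ((X:Polynomial ℝ)^(m+j)*(X-1)^j)).eval x
            * (derivative^[i] R).eval x := by
  intro i
  induction i with
  | zero => simp
  | succ i ih =>
    intro hij
    rw [ih (by omega)]
    have e1 : j - i = (j - (i+1)) + 1 := by omega
    have key := poly_parts (derivative^[j-(i+1)] ((X:Polynomial ℝ)^(m+j)*(X-1)^j))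
      (derivative^[i] R)
    obtain ⟨h0, h1⟩ := deriv_Q_bdry m j (j - (i+1)) (by omega)
    rw [h0, h1, zero_mul, zero_mul, sub_zero, zero_sub] at key
    have eQ : (⇑derivative)^[j-i] ((X:Polynomial ℝ)^(m+j)*(X-1)^j)
        = derivative ((⇑derivative)^[j-(i+1)] ((X:Polynomial ℝ)^(m+j)*(X-1)^j)) := by
      rw [e1, Function.iterate_succ_apply']
    have eR : (⇑derivative)^[i+1] R = derivative ((⇑derivative)^[i] R) :=
      Function.iterate_succ_apply' _ _ _
    rw [eQ, eR, key]
    ring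

lemma monic_Q (m j : ℕ) : ((X:Polynomial ℝ)^(m+j)*(X-1)^j).Monic := by
  have h1 : ((X:Polynomial ℝ) - 1).Monic := by
    have := monic_X_sub_C (1:ℝ); simpa using this
  exact (monic_X_pow _).mul (h1.pow j)

lemma natDeg_Q (m j : ℕ) : ((X:Polynomial ℝ)^(m+j)*(X-1)^j).natDegree = m + 2*j := by
  have h1 : ((X:Polynomial ℝ) - 1).Monic := by
    have := monic_X_sub_C (1:ℝ); simpa using this
  rw [(monic_X_pow _).natDegree_mul (h1.pow j), natDegree_X_pow, h1.natDegree_pow]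
  have : ((X:Polynomial ℝ) - 1).natDegree = 1 := by
    have := natDegree_X_sub_C (1:ℝ); simpa using this
  rw [this]; ring

lemma iter_deriv_of_deg_le {p : Polynomial ℝ} {k : ℕ} (h : p.natDegree ≤ k) :
    derivative^[k] p = C ((k.factorial : ℝ) * p.coeff k) := by
  have hd : (derivative^[k] p).natDegree ≤ 0 :=
    (p.natDegree_iterate_derivative k).trans (by omega)
  have hC := Polynomial.eq_C_of_natDegree_le_zero hd
  rw [hC, Polynomial.coeff_iterate_derivative, zero_add, Nat.descFactorial_self]
  rw [nsmul_eq_mul]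

section withP
variable {P : ℕ → ℕ → Polynomial ℝ}
  (hP0 : ∀ m, P m 0 = 1)
  (hP : ∀ m n, 1 ≤ n →
      (X : Polynomial ℝ) ^ m * P m n
        = C (1 / (n.factorial : ℝ)) *
            derivative^[n] (X ^ (m + n) * (X - 1) ^ n))

include hP0 hP

lemma degP (m k : ℕ) : (P m k).natDegree ≤ k := by
  rcases Nat.eq_zero_or_pos k with rfl | hk
  · rw [hP0]; simp
  · by_cases h0 : P m k = 0
    · simp [h0]
    have hdeg : ((X:Polynomial ℝ)^m * P m k).natDegree ≤ m + k := by
      rw [hP m k hk]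
      refine (natDegree_C_mul_le _ _).trans ?_
      refine (Polynomial.natDegree_iterate_derivative _ _).trans ?_
      rw [natDeg_Q]; omega
    rw [natDegree_mul (by exact pow_ne_zero _ X_ne_zero) h0, natDegree_X_pow] at hdeg
    omega

lemma coeffP (m k : ℕ) (hk : 1 ≤ k) :
    (P m k).coeff k = (1 / (k.factorial : ℝ)) * ((m + 2*k).descFactorial k : ℝ) := by
  have h := congrArg (fun p => Polynomial.coeff p (k + m)) (hP m k hk)
  simp only [Polynomial.coeff_X_pow_mul, Polynomial.coeff_C_mul] at h
  rw [Polynomial.coeff_iterate_derivative] at h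
  have e : k + m + k = m + 2*k := by ring
  rw [e] at h
  have : ((X:Polynomial ℝ)^(m+k)*(X-1)^k).coeff (m + 2*k) = 1 := by
    have := (monic_Q m k).coeff_natDegree
    rwa [natDeg_Q] at this
  rw [this, nsmul_eq_mul, mul_one] at h
  exact h

lemma ortho (m : ℕ) : ∀ j k : ℕ,
    ∫ x in (0:ℝ)..1, x^m * (P m j).eval x * (P m k).eval x
      = if j = k then 1/((m:ℝ)+2*j+1) else 0 := by
  -- main case : k ≤ j
  have main : ∀ j k : ℕ, k ≤ j →
      ∫ x in (0:ℝ)..1, x^m * (P m j).eval x * (P m k).eval x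
        = if j = k then 1/((m:ℝ)+2*j+1) else 0 := by
    intro j k hkj
    rcases Nat.eq_zero_or_pos j with rfl | hj
    · interval_cases k
      rw [hP0]
      simp only [eval_one, mul_one, if_pos rfl]
      rw [integral_pow]
      push_cast; norm_num
    · -- j ≥ 1
      have hfj : ((j.factorial : ℝ)) ≠ 0 := Nat.cast_ne_zero.2 j.factorial_ne_zero
      have hev : ∀ x : ℝ, x^m * (P m j).eval x * (P m k).eval x
          = (1 / (j.factorial : ℝ)) *
            ((derivative^[j] ((X:Polynomial ℝ)^(m+j)*(X-1)^j)).eval x * (P m k).eval x) := by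
        intro x
        have := congrArg (Polynomial.eval x) (hP m j hj)
        simp only [eval_mul, eval_pow, eval_X, eval_C] at this
        rw [this]; ring
      rw [show (fun x : ℝ => x^m * (P m j).eval x * (P m k).eval x)
        = fun x : ℝ => (1 / (j.factorial : ℝ)) *
            ((derivative^[j] ((X:Polynomial ℝ)^(m+j)*(X-1)^j)).eval x * (P m k).eval x)
        from funext hev]
      rw [intervalIntegral.integral_const_mul, iter_parts j m (P m k) j le_rfl]
      rcases lt_or_eq_of_le hkj with hlt | rfl
      · rw [Polynomial.iterate_derivative_eq_zero (lt_of_le_of_lt (degP hP0 hP m k) hlt)]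
        simp [Nat.ne_of_gt hlt]
      · -- k = k
        rw [if_pos rfl]
        rw [iter_deriv_of_deg_le (degP hP0 hP m k)]
        simp only [Nat.sub_self, Function.iterate_zero_apply]
        simp only [eval_mul, eval_pow, eval_sub, eval_X, eval_one, eval_C]
        rw [intervalIntegral.integral_mul_const, beta_int, coeffP hP0 hP m k hj]
        have hdesc : ((m+k).factorial) * ((m + 2*k).descFactorial k) = (m + 2*k).factorial := by
          have := Nat.factorial_mul_descFactorial (n := m + 2*k) (k := k) (by omega)
          rwa [show m + 2*k - k = m + k from by omega] at this
        have hfs : ((m + 2*k + 1).factorial : ℝ) = ((m:ℝ) + 2*k + 1) * ((m+2*k).factorial) := by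
          rw [Nat.factorial_succ]; push_cast; ring
        have h1 : ((m+k).factorial : ℝ) ≠ 0 := Nat.cast_ne_zero.2 (Nat.factorial_ne_zero _)
        have h2 : ((m+2*k).factorial : ℝ) ≠ 0 := Nat.cast_ne_zero.2 (Nat.factorial_ne_zero _)
        have h3 : ((m:ℝ) + 2*k + 1) ≠ 0 := by positivity
        have hdescR : ((m+k).factorial : ℝ) * ((m + 2*k).descFactorial k : ℝ)
            = ((m + 2*k).factorial : ℝ) := by exact_mod_cast congrArg Nat.cast hdesc
        have e2 : m + k + k + 1 = m + 2*k + 1 := by ring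
        rw [e2, hfs]
        have hsq : ((-1:ℝ))^k * (-1)^k = 1 := by rw [← mul_pow]; norm_num
        field_simp
        linear_combination ((-1:ℝ)^k)^2 * hdescR + (((m+2*k).factorial:ℝ)) * hsq
  intro j k
  rcases le_total k j with h | h
  · exact main j k h
  · have hcomm : ∀ x : ℝ, x^m * (P m j).eval x * (P m k).eval x
        = x^m * (P m k).eval x * (P m j).eval x := fun x => by ring
    rw [show (fun x : ℝ => x^m * (P m j).eval x * (P m k).eval x)
      = fun x : ℝ => x^m * (P m k).eval x * (P m j).eval x from funext hcomm]
    rw [main k j h]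
    rcases eq_or_ne j k with rfl | hne
    · simp
    · simp [hne, Ne.symm hne]

end withP

lemma cov (a b : ℝ) (hab : a < b) (F : ℝ → ℝ) :
    ∫ s in a..b, F ((s-a)/(b-a)) = (b-a) * ∫ x in (0:ℝ)..1, F x := by
  have hne : b - a ≠ 0 := sub_ne_zero.2 hab.ne'
  have h1 := intervalIntegral.integral_comp_sub_right (a := a) (b := b)
    (fun s => F (s/(b-a))) a
  have h2 := intervalIntegral.integral_comp_div (a := a - a) (b := b - a)
    (c := b - a) (f := F) hne
  rw [h1, h2, sub_self, zero_div, div_self hne, smul_eq_mul]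

section vec
variable {n : ℕ} (W : Matrix (Fin n) (Fin n) ℝ)

lemma mulVec_sum' (T : Finset ℕ) (φ : ℕ → Fin n → ℝ) :
    W.mulVec (∑ j ∈ T, φ j) = ∑ j ∈ T, W.mulVec (φ j) := by
  ext i
  simp only [Matrix.mulVec, dotProduct, Finset.sum_apply, Finset.mul_sum]
  exact Finset.sum_comm

lemma dotProduct_sum' (v : Fin n → ℝ) (T : Finset ℕ) (φ : ℕ → Fin n → ℝ) :
    v ⬝ᵥ (∑ j ∈ T, φ j) = ∑ j ∈ T, v ⬝ᵥ φ j := by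
  simp only [dotProduct, Finset.sum_apply, Finset.mul_sum]
  exact Finset.sum_comm

lemma symmdot (hWsym : W.IsSymm) (v u : Fin n → ℝ) :
    v ⬝ᵥ W.mulVec u = u ⬝ᵥ W.mulVec v := by
  simp only [Matrix.mulVec, dotProduct, Finset.mul_sum]
  rw [Finset.sum_comm]
  refine Finset.sum_congr rfl fun l _ => Finset.sum_congr rfl fun i _ => ?_
  rw [← hWsym.apply l i]
  ring

lemma quad_expand (hWsym : W.IsSymm) (T : Finset ℕ) (v : Fin n → ℝ) (t : ℕ → ℝ)
    (wv : ℕ → Fin n → ℝ) :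
    (v - ∑ j ∈ T, t j • wv j) ⬝ᵥ W.mulVec (v - ∑ j ∈ T, t j • wv j)
      = v ⬝ᵥ W.mulVec v - ∑ j ∈ T, 2 * t j * (v ⬝ᵥ W.mulVec (wv j))
        + ∑ j ∈ T, ∑ k ∈ T, t j * t k * (wv j ⬝ᵥ W.mulVec (wv k)) := by
  have hright : ∀ x : Fin n → ℝ,
      x ⬝ᵥ W.mulVec (∑ j ∈ T, t j • wv j) = ∑ j ∈ T, t j * (x ⬝ᵥ W.mulVec (wv j)) := by
    intro x
    rw [mulVec_sum', dotProduct_sum']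
    refine Finset.sum_congr rfl fun j _ => ?_
    rw [Matrix.mulVec_smul, dotProduct_smul, smul_eq_mul]
  have e1 : (∑ j ∈ T, t j • wv j) ⬝ᵥ W.mulVec v
      = ∑ j ∈ T, t j * (v ⬝ᵥ W.mulVec (wv j)) := by
    rw [symmdot W hWsym, hright v]
  have e2 : (∑ j ∈ T, t j • wv j) ⬝ᵥ W.mulVec (∑ j ∈ T, t j • wv j)
      = ∑ j ∈ T, ∑ k ∈ T, t j * t k * (wv j ⬝ᵥ W.mulVec (wv k)) := by
    rw [hright]
    refine Finset.sum_congr rfl fun j _ => ?_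
    rw [symmdot W hWsym, hright (wv j), Finset.mul_sum]
    exact Finset.sum_congr rfl fun k _ => by ring
  have e3 : ∑ j ∈ T, 2 * t j * (v ⬝ᵥ W.mulVec (wv j))
      = 2 * ∑ j ∈ T, t j * (v ⬝ᵥ W.mulVec (wv j)) := by
    rw [Finset.mul_sum]
    exact Finset.sum_congr rfl fun j _ => by ring
  rw [Matrix.mulVec_sub, sub_dotProduct, dotProduct_sub, dotProduct_sub,
    hright v, e1, e2, e3]
  ring

end vec

set_option maxHeartbeats 1000000 in
/-- Lemma 2 of the paper (integral inequality): for a symmetric positive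
semidefinite `W`, a continuous `f : [a,b] → ℝⁿ`, and the projections
`w_{m,j} = ∫_a^b ((s-a)/(b-a))^m P_{m,j}((s-a)/(b-a)) f(s) ds`,
`∫_a^b ((s-a)/(b-a))^m f(s)ᵀ W f(s) ds
  ≥ (1/(b-a)) ∑_{j=0}^ν (m+2j+1) w_{m,j}ᵀ W w_{m,j}`. -/
theorem stmt_10 (P : ℕ → ℕ → Polynomial ℝ)
    (hP0 : ∀ m, P m 0 = 1)
    (hP : ∀ m n, 1 ≤ n →
      (X : Polynomial ℝ) ^ m * P m n
        = C (1 / (n.factorial : ℝ)) *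
            derivative^[n] (X ^ (m + n) * (X - 1) ^ n))
    (n : ℕ) (hn : 1 ≤ n)
    (W : Matrix (Fin n) (Fin n) ℝ) (hWsym : W.IsSymm)
    (hWpsd : ∀ v : Fin n → ℝ, 0 ≤ v ⬝ᵥ W.mulVec v)
    (m ν : ℕ) (a b : ℝ) (hab : a < b)
    (f : ℝ → Fin n → ℝ) (hf : ContinuousOn f (Set.Icc a b))
    (w : ℕ → Fin n → ℝ)
    (hw : ∀ j i, w j i =
      ∫ s in a..b,
        ((s - a) / (b - a)) ^ m * (P m j).eval ((s - a) / (b - a)) * f s i) :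
    (1 / (b - a)) * ∑ j ∈ Finset.range (ν + 1),
        ((m : ℝ) + 2 * j + 1) * (w j ⬝ᵥ W.mulVec (w j))
      ≤ ∫ s in a..b, ((s - a) / (b - a)) ^ m * (f s ⬝ᵥ W.mulVec (f s)) := by
  classical
  have hc : (0:ℝ) < b - a := sub_pos.2 hab
  have hcne : b - a ≠ 0 := hc.ne'
  set T := Finset.range (ν + 1) with hT
  set u : ℝ → ℝ := fun s => (s - a) / (b - a) with hu
  set c : ℕ → ℝ := fun j => ((m:ℝ) + 2*j + 1) / (b - a) with hcdef
  -- continuity infrastructure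
  have hucont : Continuous u := (continuous_id.sub continuous_const).div_const _
  have hfi : ∀ i, ContinuousOn (fun s => f s i) (Set.Icc a b) :=
    fun i => (continuous_apply i).comp_continuousOn hf
  have hII : ∀ {h : ℝ → ℝ}, ContinuousOn h (Set.Icc a b) →
      IntervalIntegrable h volume a b := by
    intro h hh
    exact ContinuousOn.intervalIntegrable (by rwa [Set.uIcc_of_le hab.le])
  have hPk : ∀ k : ℕ, Continuous (fun s => (P m k).eval (u s)) :=
    fun k => (P m k).continuous.comp hucont
  have hψ : ∀ j : ℕ, Continuous (fun s => (u s)^m * (P m j).eval (u s)) :=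
    fun j => (hucont.pow m).mul (hPk j)
  have hdotf : ∀ v : Fin n → ℝ, ContinuousOn (fun s => f s ⬝ᵥ W.mulVec v) (Set.Icc a b) := by
    intro v
    have : Continuous (fun x : Fin n → ℝ => x ⬝ᵥ W.mulVec v) := by
      simp only [dotProduct]
      exact continuous_finset_sum _ fun i _ => (continuous_apply i).mul continuous_const
    exact this.comp_continuousOn hf
  have hdotff : ContinuousOn (fun s => f s ⬝ᵥ W.mulVec (f s)) (Set.Icc a b) := by
    have : Continuous (fun x : Fin n → ℝ => x ⬝ᵥ W.mulVec x) := by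
      simp only [dotProduct, Matrix.mulVec]
      exact continuous_finset_sum _ fun i _ => (continuous_apply i).mul
        (continuous_finset_sum _ fun l _ => continuous_const.mul (continuous_apply l))
    exact this.comp_continuousOn hf
  -- the three integrals
  have hI2 : ∀ j : ℕ,
      (∫ s in a..b, (u s)^m * (P m j).eval (u s) * (f s ⬝ᵥ W.mulVec (w j)))
        = w j ⬝ᵥ W.mulVec (w j) := by
    intro j
    have hpt : (fun s => (u s)^m * (P m j).eval (u s) * (f s ⬝ᵥ W.mulVec (w j)))
        = fun s => ∑ i : Fin n,
            ((u s)^m * (P m j).eval (u s) * f s i) * (W.mulVec (w j) i) := by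
      funext s
      simp only [dotProduct, Finset.mul_sum]
      exact Finset.sum_congr rfl fun i _ => by ring
    rw [hpt, intervalIntegral.integral_finset_sum
      (f := fun i s => ((u s)^m * (P m j).eval (u s) * f s i) * (W.mulVec (w j) i)) (fun i _ =>
      hII ((((hψ j).continuousOn.mul (hfi i))).mul continuousOn_const))]
    have hterm : ∀ i : Fin n,
        (∫ s in a..b, ((u s)^m * (P m j).eval (u s) * f s i) * (W.mulVec (w j) i))
          = w j i * W.mulVec (w j) i := by
      intro i
      rw [intervalIntegral.integral_mul_const, ← hw j i]
    simp only [hterm]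
    simp [dotProduct]
  have hI3 : ∀ j k : ℕ,
      (∫ s in a..b, (u s)^m * (P m j).eval (u s) * (P m k).eval (u s))
        = if j = k then (b-a) * (1/((m:ℝ)+2*j+1)) else 0 := by
    intro j k
    have hcov := cov a b hab (fun x => x^m * (P m j).eval x * (P m k).eval x)
    rw [hu]
    rw [show (fun s => ((s-a)/(b-a))^m * (P m j).eval ((s-a)/(b-a))
        * (P m k).eval ((s-a)/(b-a)))
      = (fun s => (fun x => x^m * (P m j).eval x * (P m k).eval x) ((s-a)/(b-a)))
      from rfl]
    rw [hcov, ortho hP0 hP m j k]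
    split <;> simp
  -- positivity of quadratic form integral
  have key : 0 ≤ ∫ s in a..b, (u s)^m *
      ((f s - ∑ j ∈ T, (c j * (P m j).eval (u s)) • w j) ⬝ᵥ
        W.mulVec (f s - ∑ j ∈ T, (c j * (P m j).eval (u s)) • w j)) := by
    refine intervalIntegral.integral_nonneg hab.le fun s hs => ?_
    refine mul_nonneg (pow_nonneg (div_nonneg (by linarith [hs.1]) hc.le) m) (hWpsd _)
  -- pointwise expansion
  have hpt : (fun s => (u s)^m *
      ((f s - ∑ j ∈ T, (c j * (P m j).eval (u s)) • w j) ⬝ᵥ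
        W.mulVec (f s - ∑ j ∈ T, (c j * (P m j).eval (u s)) • w j)))
      = fun s => (u s)^m * (f s ⬝ᵥ W.mulVec (f s))
        - (∑ j ∈ T, (2 * c j) * ((u s)^m * (P m j).eval (u s) * (f s ⬝ᵥ W.mulVec (w j))))
        + (∑ j ∈ T, ∑ k ∈ T, (c j * c k * (w j ⬝ᵥ W.mulVec (w k)))
            * ((u s)^m * (P m j).eval (u s) * (P m k).eval (u s))) := by
    funext s
    rw [quad_expand W hWsym T (f s) (fun j => c j * (P m j).eval (u s)) w]
    have hA : ∑ j ∈ T, (2 * c j) * ((u s)^m * (P m j).eval (u s) * (f s ⬝ᵥ W.mulVec (w j)))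
        = (u s)^m * ∑ j ∈ T,
            2 * (c j * (P m j).eval (u s)) * (f s ⬝ᵥ W.mulVec (w j)) := by
      rw [Finset.mul_sum]
      exact Finset.sum_congr rfl fun j _ => by ring
    have hB : ∑ j ∈ T, ∑ k ∈ T, (c j * c k * (w j ⬝ᵥ W.mulVec (w k)))
          * ((u s)^m * (P m j).eval (u s) * (P m k).eval (u s))
        = (u s)^m * ∑ j ∈ T, ∑ k ∈ T,
            (c j * (P m j).eval (u s)) * (c k * (P m k).eval (u s))
              * (w j ⬝ᵥ W.mulVec (w k)) := by
      rw [Finset.mul_sum]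
      refine Finset.sum_congr rfl fun j _ => ?_
      rw [Finset.mul_sum]
      exact Finset.sum_congr rfl fun k _ => by ring
    linear_combination hA - hB
  -- integrability of the three pieces
  have int1 : IntervalIntegrable (fun s => (u s)^m * (f s ⬝ᵥ W.mulVec (f s))) volume a b :=
    hII ((hucont.pow m).continuousOn.mul hdotff)
  have int2term : ∀ j : ℕ, IntervalIntegrable
      (fun s => (2 * c j) * ((u s)^m * (P m j).eval (u s) * (f s ⬝ᵥ W.mulVec (w j))))
      volume a b :=
    fun j => hII (continuousOn_const.mul (((hψ j).continuousOn).mul (hdotf (w j))))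
  have int2 : IntervalIntegrable (fun s => ∑ j ∈ T,
      (2 * c j) * ((u s)^m * (P m j).eval (u s) * (f s ⬝ᵥ W.mulVec (w j)))) volume a b :=
    hII (continuousOn_finset_sum T fun j _ =>
      continuousOn_const.mul (((hψ j).continuousOn).mul (hdotf (w j))))
  have int3term : ∀ j k : ℕ, IntervalIntegrable
      (fun s => (c j * c k * (w j ⬝ᵥ W.mulVec (w k)))
        * ((u s)^m * (P m j).eval (u s) * (P m k).eval (u s))) volume a b :=
    fun j k => (continuous_const.mul ((hψ j).mul
      (hPk k))).intervalIntegrable a b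
  have int3 : IntervalIntegrable (fun s => ∑ j ∈ T, ∑ k ∈ T,
      (c j * c k * (w j ⬝ᵥ W.mulVec (w k)))
        * ((u s)^m * (P m j).eval (u s) * (P m k).eval (u s))) volume a b :=
    hII (continuousOn_finset_sum T fun j _ => continuousOn_finset_sum T fun k _ =>
      (continuous_const.mul ((hψ j).mul (hPk k))).continuousOn)
  -- compute the integral of the second piece
  have hF2 : (∫ s in a..b, ∑ j ∈ T,
      (2 * c j) * ((u s)^m * (P m j).eval (u s) * (f s ⬝ᵥ W.mulVec (w j))))
      = ∑ j ∈ T, 2 * c j * (w j ⬝ᵥ W.mulVec (w j)) := by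
    rw [intervalIntegral.integral_finset_sum (fun j _ => int2term j)]
    refine Finset.sum_congr rfl fun j _ => ?_
    rw [intervalIntegral.integral_const_mul, hI2 j]
  -- compute the integral of the third piece
  have hF3 : (∫ s in a..b, ∑ j ∈ T, ∑ k ∈ T,
      (c j * c k * (w j ⬝ᵥ W.mulVec (w k)))
        * ((u s)^m * (P m j).eval (u s) * (P m k).eval (u s)))
      = ∑ j ∈ T, c j * (w j ⬝ᵥ W.mulVec (w j)) := by
    rw [intervalIntegral.integral_finset_sum
      (f := fun j s => ∑ k ∈ T, (c j * c k * (w j ⬝ᵥ W.mulVec (w k)))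
        * ((u s)^m * (P m j).eval (u s) * (P m k).eval (u s))) (fun j _ =>
      hII (continuousOn_finset_sum T fun k _ =>
        (continuous_const.mul ((hψ j).mul (hPk k))).continuousOn))]
    refine Finset.sum_congr rfl fun j hj => ?_
    rw [intervalIntegral.integral_finset_sum (fun k _ => int3term j k)]
    have hterm : ∀ k ∈ T, (∫ s in a..b,
        (c j * c k * (w j ⬝ᵥ W.mulVec (w k)))
          * ((u s)^m * (P m j).eval (u s) * (P m k).eval (u s)))
        = if j = k then c j * c j * (w j ⬝ᵥ W.mulVec (w j)) * ((b-a) * (1/((m:ℝ)+2*j+1)))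
          else 0 := by
      intro k _
      rw [intervalIntegral.integral_const_mul, hI3 j k]
      by_cases h : j = k
      · subst h; rw [if_pos rfl, if_pos rfl]
      · rw [if_neg h, if_neg h, mul_zero]
    rw [Finset.sum_congr rfl hterm, Finset.sum_ite_eq T j
      (fun k => c j * c j * (w j ⬝ᵥ W.mulVec (w j)) * ((b-a) * (1/((m:ℝ)+2*j+1)))), if_pos hj]
    have h3 : ((m:ℝ) + 2*j + 1) ≠ 0 := by positivity
    rw [hcdef]
    field_simp
  -- assemble
  rw [hpt] at key
  rw [intervalIntegral.integral_add (int1.sub int2) int3,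
    intervalIntegral.integral_sub int1 int2, hF2, hF3] at key
  have hgoal : (1 / (b - a)) * ∑ j ∈ T, ((m : ℝ) + 2 * j + 1) * (w j ⬝ᵥ W.mulVec (w j))
      = ∑ j ∈ T, c j * (w j ⬝ᵥ W.mulVec (w j)) := by
    rw [Finset.mul_sum]
    refine Finset.sum_congr rfl fun j _ => ?_
    rw [hcdef]
    ring
  rw [hgoal]
  have h2s : ∑ j ∈ T, 2 * c j * (w j ⬝ᵥ W.mulVec (w j))
      = 2 * ∑ j ∈ T, c j * (w j ⬝ᵥ W.mulVec (w j)) := by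
    rw [Finset.mul_sum]
    exact Finset.sum_congr rfl fun j _ => by ring
  rw [h2s] at key
  linarith
end

section
/- Let n ≥ 1 and let W be a symmetric positive semidefinite real n×n matrix, let m ≥ 0 be an integer, let a < b be real numbers and f : [a,b] → ℝ^n be continuous. Set w_0 = ∫_a^b ((s-a)/(b-a))^m f(s) ds and w_1 = ∫_a^b ((s-a)/(b-a))^m · ((m+2)·(s-a)/(b-a) − (m+1)) · f(s) ds. Then ∫_a^b ((s-a)/(b-a))^m · f(s)ᵀ W f(s) ds ≥ ((m+1)/(b-a)) · w_0ᵀ W w_0 + ((m+3)/(b-a)) · w_1ᵀ W w_1. -/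
open Matrix MeasureTheory intervalIntegral

lemma stmt_11_int_pow (a b : ℝ) (hab : a < b) (k : ℕ) :
    (∫ s in a..b, ((s - a) / (b - a)) ^ k) = (b - a) / ((k : ℝ) + 1) := by
  have hc : (0:ℝ) < b - a := by linarith
  have h1 : (∫ s in a..b, (s - a) ^ k) = (b - a) ^ (k + 1) / ((k:ℝ) + 1) := by
    have h := integral_comp_sub_right (a := a) (b := b) (fun x => x ^ k) a
    rw [h, sub_self, integral_pow]
    ring
  simp only [div_pow]
  rw [intervalIntegral.integral_div, h1, pow_succ]
  field_simp

/-- The two-term (ν = 1) multiple integral inequality: with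
`w₀ = ∫_a^b ((s-a)/(b-a))^m f(s) ds` and
`w₁ = ∫_a^b ((s-a)/(b-a))^m ((m+2)(s-a)/(b-a) − (m+1)) f(s) ds`,
`∫_a^b ((s-a)/(b-a))^m f(s)ᵀ W f(s) ds
  ≥ ((m+1)/(b-a)) w₀ᵀ W w₀ + ((m+3)/(b-a)) w₁ᵀ W w₁`. -/
theorem stmt_11 (n : ℕ) (hn : 1 ≤ n)
    (W : Matrix (Fin n) (Fin n) ℝ) (hWsym : W.IsSymm)
    (hWpsd : ∀ v : Fin n → ℝ, 0 ≤ v ⬝ᵥ W.mulVec v)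
    (m : ℕ) (a b : ℝ) (hab : a < b)
    (f : ℝ → Fin n → ℝ) (hf : ContinuousOn f (Set.Icc a b))
    (w₀ w₁ : Fin n → ℝ)
    (hw₀ : ∀ i, w₀ i = ∫ s in a..b, ((s - a) / (b - a)) ^ m * f s i)
    (hw₁ : ∀ i, w₁ i =
      ∫ s in a..b, ((s - a) / (b - a)) ^ m *
        (((m : ℝ) + 2) * ((s - a) / (b - a)) - ((m : ℝ) + 1)) * f s i) :
    ((m : ℝ) + 1) / (b - a) * (w₀ ⬝ᵥ W.mulVec w₀)
        + ((m : ℝ) + 3) / (b - a) * (w₁ ⬝ᵥ W.mulVec w₁)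
      ≤ ∫ s in a..b, ((s - a) / (b - a)) ^ m * (f s ⬝ᵥ W.mulVec (f s)) := by
  have hc : (0:ℝ) < b - a := by linarith
  set P : ℝ → ℝ := fun s => ((s - a) / (b - a)) ^ m with hP
  set Q : ℝ → ℝ := fun s => ((m : ℝ) + 2) * ((s - a) / (b - a)) - ((m : ℝ) + 1) with hQ
  have hPc : Continuous P := by
    apply Continuous.pow; exact (continuous_id.sub continuous_const).div_const _
  have hQc : Continuous Q := by
    apply Continuous.sub _ continuous_const
    exact continuous_const.mul ((continuous_id.sub continuous_const).div_const _)
  have hIcc : Set.uIcc a b = Set.Icc a b := Set.uIcc_of_le hab.le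
  have hfi : ∀ i, ContinuousOn (fun s => f s i) (Set.Icc a b) :=
    fun i => (continuous_apply i).comp_continuousOn hf
  have integ : ∀ (φ : ℝ → ℝ), ContinuousOn φ (Set.Icc a b) →
      IntervalIntegrable φ volume a b := by
    intro φ h
    apply ContinuousOn.intervalIntegrable
    rwa [hIcc]
  have intPow : ∀ k : ℕ, IntervalIntegrable (fun s => ((s - a) / (b - a)) ^ k) volume a b := by
    intro k
    exact integ _ (((continuous_id.sub continuous_const).div_const _).pow k).continuousOn
  -- symmetry of the bilinear form
  have hsymm : ∀ u v : Fin n → ℝ, u ⬝ᵥ W.mulVec v = v ⬝ᵥ W.mulVec u := by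
    intro u v
    rw [Matrix.dotProduct_mulVec, ← Matrix.mulVec_transpose, hWsym.eq,
      dotProduct_comm]
  -- key linearity lemma for integrals of dot products
  have key : ∀ (φ : ℝ → ℝ), Continuous φ → ∀ (w : Fin n → ℝ),
      (∀ i, w i = ∫ s in a..b, φ s * f s i) → ∀ v : Fin n → ℝ,
      (∫ s in a..b, φ s * (f s ⬝ᵥ v)) = w ⬝ᵥ v := by
    intro φ hφ w hw v
    have h1 : ∀ s, φ s * (f s ⬝ᵥ v) = ∑ i, φ s * f s i * v i := by
      intro s
      simp only [dotProduct, Finset.mul_sum, mul_assoc]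
    simp only [h1]
    rw [intervalIntegral.integral_finset_sum]
    · simp only [dotProduct]
      refine Finset.sum_congr rfl fun i _ => ?_
      rw [intervalIntegral.integral_mul_const, ← hw i]
    · intro i _
      exact integ _ ((hφ.continuousOn.mul (hfi i)).mul continuousOn_const)
  -- the weights
  set α : Fin n → ℝ := (((m:ℝ) + 1) / (b - a)) • w₀ with hα
  set β : Fin n → ℝ := (((m:ℝ) + 3) / (b - a)) • w₁ with hβ
  set g : ℝ → Fin n → ℝ := fun s => f s - α - Q s • β with hg
  -- pointwise expansion
  have expand : ∀ s, P s * (g s ⬝ᵥ W.mulVec (g s)) =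
      P s * (f s ⬝ᵥ W.mulVec (f s))
      - 2 * (P s * (f s ⬝ᵥ W.mulVec α))
      - 2 * (P s * Q s * (f s ⬝ᵥ W.mulVec β))
      + P s * (α ⬝ᵥ W.mulVec α)
      + (P s * Q s) * (2 * (α ⬝ᵥ W.mulVec β))
      + (P s * Q s ^ 2) * (β ⬝ᵥ W.mulVec β) := by
    intro s
    simp only [hg, Matrix.mulVec_sub, Matrix.mulVec_smul, sub_dotProduct,
      dotProduct_sub, smul_dotProduct, dotProduct_smul, smul_eq_mul]
    rw [hsymm α (f s), hsymm β (f s), hsymm β α]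
    ring
  -- nonnegativity
  have hpt : ∀ s ∈ Set.Icc a b, 0 ≤ P s * (g s ⬝ᵥ W.mulVec (g s)) := by
    intro s hs
    apply mul_nonneg _ (hWpsd _)
    apply pow_nonneg
    exact div_nonneg (by linarith [hs.1]) hc.le
  have h0 : 0 ≤ ∫ s in a..b, P s * (g s ⬝ᵥ W.mulVec (g s)) :=
    intervalIntegral.integral_nonneg hab.le hpt
  -- scalar integrals
  have IP : (∫ s in a..b, P s) = (b - a) / ((m:ℝ) + 1) := stmt_11_int_pow a b hab m
  have IPQ : (∫ s in a..b, P s * Q s) = 0 := by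
    have h1 : ∀ s, P s * Q s =
        ((m:ℝ) + 2) * ((s - a) / (b - a)) ^ (m + 1)
        - ((m:ℝ) + 1) * ((s - a) / (b - a)) ^ m := by
      intro s; simp only [hP, hQ]; ring
    simp only [h1]
    rw [intervalIntegral.integral_sub ((intPow (m+1)).const_mul _) ((intPow m).const_mul _),
      intervalIntegral.integral_const_mul, intervalIntegral.integral_const_mul,
      stmt_11_int_pow a b hab (m + 1), stmt_11_int_pow a b hab m]
    push_cast
    have h2 : (m:ℝ) + 1 ≠ 0 := by positivity
    have h3 : (m:ℝ) + 2 ≠ 0 := by positivity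
    field_simp
    ring
  have IPQ2 : (∫ s in a..b, P s * Q s ^ 2) = (b - a) / ((m:ℝ) + 3) := by
    have h1 : ∀ s, P s * Q s ^ 2 =
        (((m:ℝ) + 2) * ((m:ℝ) + 2)) * ((s - a) / (b - a)) ^ (m + 2)
        - (2 * ((m:ℝ) + 1) * ((m:ℝ) + 2)) * ((s - a) / (b - a)) ^ (m + 1)
        + (((m:ℝ) + 1) * ((m:ℝ) + 1)) * ((s - a) / (b - a)) ^ m := by
      intro s; simp only [hP, hQ]; ring
    simp only [h1]
    rw [intervalIntegral.integral_add
        (((intPow (m+2)).const_mul _).sub ((intPow (m+1)).const_mul _))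
        ((intPow m).const_mul _),
      intervalIntegral.integral_sub ((intPow (m+2)).const_mul _) ((intPow (m+1)).const_mul _),
      intervalIntegral.integral_const_mul, intervalIntegral.integral_const_mul,
      intervalIntegral.integral_const_mul,
      stmt_11_int_pow a b hab (m + 2), stmt_11_int_pow a b hab (m + 1),
      stmt_11_int_pow a b hab m]
    push_cast
    have h2 : (m:ℝ) + 1 ≠ 0 := by positivity
    have h3 : (m:ℝ) + 2 ≠ 0 := by positivity
    have h4 : (m:ℝ) + 3 ≠ 0 := by positivity
    field_simp
    ring
  -- continuity of the quadratic form and of dot products with a fixed vector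
  have hquadc : Continuous fun v : Fin n → ℝ => v ⬝ᵥ W.mulVec v := by
    show Continuous fun v : Fin n → ℝ => ∑ i, v i * ∑ j, W i j * v j
    exact continuous_finset_sum _ fun i _ => (continuous_apply i).mul
      (continuous_finset_sum _ fun j _ => continuous_const.mul (continuous_apply j))
  have hdot : ∀ u : Fin n → ℝ, ContinuousOn (fun s => f s ⬝ᵥ u) (Set.Icc a b) := by
    intro u
    have : Continuous fun v : Fin n → ℝ => v ⬝ᵥ u := by
      show Continuous fun v : Fin n → ℝ => ∑ i, v i * u i
      exact continuous_finset_sum _ fun i _ => (continuous_apply i).mul continuous_const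
    exact this.comp_continuousOn hf
  -- integrability of all pieces
  have i1 : IntervalIntegrable (fun s => P s * (f s ⬝ᵥ W.mulVec (f s))) volume a b :=
    integ _ (hPc.continuousOn.mul (hquadc.comp_continuousOn hf))
  have i2 : IntervalIntegrable (fun s => 2 * (P s * (f s ⬝ᵥ W.mulVec α))) volume a b :=
    ((integ _ (hPc.continuousOn.mul (hdot (W.mulVec α))))).const_mul _
  have i3 : IntervalIntegrable (fun s => 2 * (P s * Q s * (f s ⬝ᵥ W.mulVec β))) volume a b :=
    ((integ _ (((hPc.mul hQc).continuousOn).mul (hdot (W.mulVec β))))).const_mul _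
  have i4 : IntervalIntegrable (fun s => P s * (α ⬝ᵥ W.mulVec α)) volume a b :=
    (integ _ hPc.continuousOn).mul_const _
  have i5 : IntervalIntegrable (fun s => (P s * Q s) * (2 * (α ⬝ᵥ W.mulVec β))) volume a b :=
    (integ _ (hPc.mul hQc).continuousOn).mul_const _
  have i6 : IntervalIntegrable (fun s => (P s * Q s ^ 2) * (β ⬝ᵥ W.mulVec β)) volume a b :=
    (integ _ (hPc.mul (hQc.pow 2)).continuousOn).mul_const _
  -- the componentwise hypotheses in terms of P, Q
  have hw₀' : ∀ i, w₀ i = ∫ s in a..b, P s * f s i := hw₀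
  have hw₁' : ∀ i, w₁ i = ∫ s in a..b, P s * Q s * f s i := hw₁
  have K0 : ∀ v : Fin n → ℝ, (∫ s in a..b, P s * (f s ⬝ᵥ v)) = w₀ ⬝ᵥ v :=
    fun v => key P hPc w₀ hw₀' v
  have K1 : ∀ v : Fin n → ℝ, (∫ s in a..b, P s * Q s * (f s ⬝ᵥ v)) = w₁ ⬝ᵥ v :=
    fun v => key (fun s => P s * Q s) (hPc.mul hQc) w₁ hw₁' v
  -- split the integral
  have hsplit : (∫ s in a..b, P s * (g s ⬝ᵥ W.mulVec (g s)))
      = (∫ s in a..b, P s * (f s ⬝ᵥ W.mulVec (f s)))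
        - 2 * (w₀ ⬝ᵥ W.mulVec α) - 2 * (w₁ ⬝ᵥ W.mulVec β)
        + ((b - a) / ((m:ℝ) + 1)) * (α ⬝ᵥ W.mulVec α)
        + 0 * (2 * (α ⬝ᵥ W.mulVec β))
        + ((b - a) / ((m:ℝ) + 3)) * (β ⬝ᵥ W.mulVec β) := by
    simp only [expand]
    rw [intervalIntegral.integral_add ((((i1.sub i2).sub i3).add i4).add i5) i6,
      intervalIntegral.integral_add (((i1.sub i2).sub i3).add i4) i5,
      intervalIntegral.integral_add ((i1.sub i2).sub i3) i4,
      intervalIntegral.integral_sub (i1.sub i2) i3,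
      intervalIntegral.integral_sub i1 i2,
      intervalIntegral.integral_const_mul, intervalIntegral.integral_const_mul,
      intervalIntegral.integral_mul_const, intervalIntegral.integral_mul_const,
      intervalIntegral.integral_mul_const,
      K0 (W.mulVec α), K1 (W.mulVec β), IP, IPQ, IPQ2]
  -- evaluate the dot products with the scaled weights
  have e1 : w₀ ⬝ᵥ W.mulVec α = ((m:ℝ) + 1) / (b - a) * (w₀ ⬝ᵥ W.mulVec w₀) := by
    simp [hα, Matrix.mulVec_smul]
  have e2 : w₁ ⬝ᵥ W.mulVec β = ((m:ℝ) + 3) / (b - a) * (w₁ ⬝ᵥ W.mulVec w₁) := by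
    simp [hβ, Matrix.mulVec_smul]
  have e3 : α ⬝ᵥ W.mulVec α = (((m:ℝ) + 1) / (b - a))^2 * (w₀ ⬝ᵥ W.mulVec w₀) := by
    simp [hα, Matrix.mulVec_smul, smul_smul]
    ring
  have e4 : β ⬝ᵥ W.mulVec β = (((m:ℝ) + 3) / (b - a))^2 * (w₁ ⬝ᵥ W.mulVec w₁) := by
    simp [hβ, Matrix.mulVec_smul, smul_smul]
    ring
  rw [hsplit, e1, e2, e3, e4] at h0
  have h2 : (m:ℝ) + 1 ≠ 0 := by positivity
  have h4 : (m:ℝ) + 3 ≠ 0 := by positivity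
  have c1 : (b - a) / ((m:ℝ) + 1) * ((((m:ℝ) + 1) / (b - a))^2 * (w₀ ⬝ᵥ W.mulVec w₀))
      = ((m:ℝ) + 1) / (b - a) * (w₀ ⬝ᵥ W.mulVec w₀) := by
    field_simp
  have c2 : (b - a) / ((m:ℝ) + 3) * ((((m:ℝ) + 3) / (b - a))^2 * (w₁ ⬝ᵥ W.mulVec w₁))
      = ((m:ℝ) + 3) / (b - a) * (w₁ ⬝ᵥ W.mulVec w₁) := by
    field_simp
  rw [c1, c2, zero_mul] at h0
  linarith
end

section
/- Let n ≥ 1 and let W be a symmetric positive semidefinite real n×n matrix, let m ≥ 0 and ν ≥ 0 be integers, let a < b be real numbers and f : [a,b] → ℝ^n be continuously differentiable. Define q_{m,m+j}(x) = x^m · P_{m,j}(x) and, for 0 ≤ j ≤ ν, θ_{m,j} = f(b) − q_{m,m+j}(0)·f(a) − (1/(b-a)) · ∫_a^b q'_{m,m+j}((s-a)/(b-a)) · f(s) ds ∈ ℝ^n. Then ∫_a^b ((s-a)/(b-a))^m · f'(s)ᵀ W f'(s) ds ≥ (1/(b-a)) · Σ_{j=0}^{ν} (m+2j+1) · θ_{m,j}ᵀ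 W θ_{m,j}. -/
open Polynomial Matrix MeasureTheory intervalIntegral Set

namespace Stmt13Aux

lemma polyII (p : Polynomial ℝ) (a b : ℝ) :
    IntervalIntegrable (fun x => p.eval x) volume a b :=
  p.continuous.intervalIntegrable _ _

/-- polynomial integration by parts -/
lemma polyIBP (p g : Polynomial ℝ) (a b : ℝ) :
    ∫ x in a..b, p.eval x * (derivative g).eval x
      = p.eval b * g.eval b - p.eval a * g.eval a
        - ∫ x in a..b, (derivative p).eval x * g.eval x :=
  integral_mul_deriv_eq_deriv_mul (fun x _ => p.hasDerivAt x) (fun x _ => g.hasDerivAt x)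
    (polyII _ _ _) (polyII _ _ _)

/-- iterated integration by parts -/
lemma iterIBP (k : ℕ) (g : Polynomial ℝ)
    (h0 : ∀ i < k, (derivative^[i] g).eval 0 = 0)
    (h1 : ∀ i < k, (derivative^[i] g).eval 1 = 0) (p : Polynomial ℝ) :
    ∫ x in (0:ℝ)..1, p.eval x * (derivative^[k] g).eval x
      = (-1)^k * ∫ x in (0:ℝ)..1, (derivative^[k] p).eval x * g.eval x := by
  induction k generalizing p with
  | zero => simp
  | succ k ih =>
    have step : ∫ x in (0:ℝ)..1, p.eval x * (derivative^[k+1] g).eval x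
        = - ∫ x in (0:ℝ)..1, (derivative p).eval x * (derivative^[k] g).eval x := by
      rw [Function.iterate_succ_apply']
      rw [polyIBP p (derivative^[k] g) 0 1]
      rw [h0 k (Nat.lt_succ_self k), h1 k (Nat.lt_succ_self k)]
      ring
    rw [step, ih (fun i hi => h0 i (hi.trans (Nat.lt_succ_self k)))
      (fun i hi => h1 i (hi.trans (Nat.lt_succ_self k))) (derivative p),
      ← Function.iterate_succ_apply]
    ring






section

lemma vanish0 (m k i : ℕ) (hi : i < m + k) :
    (derivative^[i] ((X:Polynomial ℝ)^(m+k) * (X-1)^k)).eval 0 = 0 := by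
  rw [iterate_derivative_mul, eval_finset_sum]
  apply Finset.sum_eq_zero
  intro j hj
  rw [Finset.mem_range, Nat.lt_succ_iff] at hj
  rw [iterate_derivative_X_pow_eq_C_mul]
  have h : m + k - (i - j) ≠ 0 := by omega
  simp [eval_smul, h]

lemma vanish1 (m k i : ℕ) (hi : i < k) :
    (derivative^[i] ((X:Polynomial ℝ)^(m+k) * (X-1)^k)).eval 1 = 0 := by
  have hX1 : ((X:Polynomial ℝ) - 1) = X - C 1 := by simp
  rw [iterate_derivative_mul, eval_finset_sum]
  apply Finset.sum_eq_zero
  intro j hj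
  rw [Finset.mem_range, Nat.lt_succ_iff] at hj
  rw [hX1, iterate_derivative_X_sub_pow]
  have h : k - j ≠ 0 := by omega
  simp [eval_smul, h]

lemma betaInt (a b : ℕ) :
    ∫ x in (0:ℝ)..1, x^a * (x-1)^b
      = (-1)^b * ((a.factorial * b.factorial : ℝ) / (a+b+1).factorial) := by
  induction b generalizing a with
  | zero =>
    simp only [pow_zero, mul_one, Nat.factorial_zero, Nat.cast_one, one_mul]
    rw [integral_pow]
    have h1 : ((a:ℝ)+1) ≠ 0 := by positivity
    have h2 : (a.factorial : ℝ) ≠ 0 := by positivity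
    rw [Nat.factorial_succ]
    push_cast
    field_simp
    simp
  | succ b ih =>
    have ha : ((a:ℝ)+1) ≠ 0 := by positivity
    have hcast : (((a+1 : ℕ)) : ℝ) = (a:ℝ)+1 := by push_cast; ring
    have hg : derivative (C ((a:ℝ)+1)⁻¹ * X^(a+1)) = X^a := by
      rw [derivative_C_mul, derivative_X_pow, ← mul_assoc, ← C_mul, hcast,
        inv_mul_cancel₀ ha]
      simp
    have h1 : ∫ x in (0:ℝ)..1, x^a * (x-1)^(b+1)
        = ∫ x in (0:ℝ)..1, ((X - 1 : Polynomial ℝ)^(b+1)).eval x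
            * ((derivative (C ((a:ℝ)+1)⁻¹ * X^(a+1))).eval x) := by
      rw [hg]
      apply intervalIntegral.integral_congr
      intro x _
      simp [mul_comm]
    rw [h1, polyIBP]
    have hb0 : (((X:Polynomial ℝ) - 1)^(b+1)).eval 1 = 0 := by simp
    have hg0 : (C ((a:ℝ)+1)⁻¹ * (X:Polynomial ℝ)^(a+1)).eval 0 = 0 := by simp
    rw [hb0, hg0]
    have hder : derivative (((X:Polynomial ℝ) - 1)^(b+1)) = C ((b:ℝ)+1) * (X-1)^b := by
      rw [derivative_pow]
      have : (((b+1 : ℕ)) : ℝ) = (b:ℝ)+1 := by push_cast; ring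
      simp [this]
    rw [hder]
    have h2 : ∫ x in (0:ℝ)..1, (C ((b:ℝ)+1) * ((X:Polynomial ℝ)-1)^b).eval x
          * ((C ((a:ℝ)+1)⁻¹ * X^(a+1)).eval x)
        = (((b:ℝ)+1) * ((a:ℝ)+1)⁻¹) * ∫ x in (0:ℝ)..1, x^(a+1) * (x-1)^b := by
      rw [← intervalIntegral.integral_const_mul]
      apply intervalIntegral.integral_congr
      intro x _
      simp
      ring
    rw [h2, ih (a+1)]
    have hidx : a + 1 + b + 1 = a + (b+1) + 1 := by omega
    rw [hidx]
    have h3 : ((a + (b+1) + 1).factorial : ℝ) ≠ 0 := by positivity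
    rw [Nat.factorial_succ (a), Nat.factorial_succ (b)]
    push_cast
    field_simp
    ring
end




section

lemma monic_g (m k : ℕ) : ((X:Polynomial ℝ)^(m+k) * (X-1)^k).Monic := by
  have h1 : ((X:Polynomial ℝ) - 1) = X - C 1 := by simp
  exact (monic_X_pow (m+k)).mul (by rw [h1]; exact (monic_X_sub_C (1:ℝ)).pow k)

lemma natDegree_g (m k : ℕ) : ((X:Polynomial ℝ)^(m+k) * (X-1)^k).natDegree = m + 2*k := by
  have h1 : ((X:Polynomial ℝ) - 1) = X - C 1 := by simp
  rw [h1, (monic_X_pow (m+k)).natDegree_mul ((monic_X_sub_C (1:ℝ)).pow k)]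
  rw [natDegree_X_pow, natDegree_pow, natDegree_X_sub_C]
  omega

lemma degP (m k : ℕ) (p : Polynomial ℝ)
    (hp : (X:Polynomial ℝ)^m * p
      = C (1/(k.factorial:ℝ)) * derivative^[k] ((X:Polynomial ℝ)^(m+k) * (X-1)^k)) :
    p.natDegree ≤ k := by
  rcases eq_or_ne p 0 with h | h
  · simp [h]
  have hL : ((X:Polynomial ℝ)^m * p).natDegree = m + p.natDegree := by
    rw [natDegree_mul (pow_ne_zero m X_ne_zero) h, natDegree_X_pow]
  have hR : ((C (1/(k.factorial:ℝ)) : Polynomial ℝ)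
      * derivative^[k] ((X:Polynomial ℝ)^(m+k) * (X-1)^k)).natDegree ≤ m + k := by
    refine (natDegree_mul_le).trans ?_
    rw [natDegree_C]
    have := natDegree_iterate_derivative ((X:Polynomial ℝ)^(m+k) * (X-1)^k) k
    rw [natDegree_g] at this
    omega
  rw [← hp, hL] at hR
  omega

lemma coeffP (m k : ℕ) (p : Polynomial ℝ)
    (hp : (X:Polynomial ℝ)^m * p
      = C (1/(k.factorial:ℝ)) * derivative^[k] ((X:Polynomial ℝ)^(m+k) * (X-1)^k)) :
    p.coeff k = ((m+2*k).descFactorial k : ℝ) / k.factorial := by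
  have h1 : p.coeff k = ((X:Polynomial ℝ)^m * p).coeff (k + m) := by
    rw [coeff_X_pow_mul]
  rw [h1, hp, coeff_C_mul, coeff_iterate_derivative]
  have hidx : k + m + k = m + 2*k := by omega
  rw [hidx]
  have hc : ((X:Polynomial ℝ)^(m+k) * (X-1)^k).coeff (m + 2*k) = 1 := by
    have := (monic_g m k).coeff_natDegree
    rwa [natDegree_g] at this
  rw [hc]
  simp only [nsmul_eq_mul, mul_one]
  ring

lemma iterDerivP (k : ℕ) (p : Polynomial ℝ) (hdeg : p.natDegree ≤ k) :
    derivative^[k] p = C ((k.factorial : ℝ) * p.coeff k) := by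
  have hd : (derivative^[k] p).natDegree = 0 := by
    have := natDegree_iterate_derivative p k
    omega
  calc derivative^[k] p = C ((derivative^[k] p).coeff 0) :=
        (eq_C_of_natDegree_le_zero hd.le)
    _ = C ((k.factorial : ℝ) * p.coeff k) := by
        rw [coeff_iterate_derivative]
        simp [Nat.descFactorial_self, nsmul_eq_mul]

lemma evalP1 (m k : ℕ) (p : Polynomial ℝ)
    (hp : (X:Polynomial ℝ)^m * p
      = C (1/(k.factorial:ℝ)) * derivative^[k] ((X:Polynomial ℝ)^(m+k) * (X-1)^k)) :
    p.eval 1 = 1 := by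
  have h1 : ((X:Polynomial ℝ) - 1) = X - C 1 := by simp
  have := congrArg (fun r => Polynomial.eval (1:ℝ) r) hp
  simp only [eval_mul, eval_pow, eval_X, one_pow, one_mul, eval_C] at this
  rw [this, iterate_derivative_mul, eval_finset_sum]
  rw [Finset.sum_eq_single_of_mem k (Finset.self_mem_range_succ k)]
  · rw [Nat.choose_self, one_smul, eval_mul, Nat.sub_self]
    rw [h1, iterate_derivative_X_sub_pow_self]
    simp [Nat.factorial_ne_zero]
  · intro j hj hjk
    rw [Finset.mem_range, Nat.lt_succ_iff] at hj
    rw [h1, iterate_derivative_X_sub_pow]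
    have : k - j ≠ 0 := by omega
    simp [eval_smul, this]

end

lemma orthPP (m j k : ℕ) (hjk : j ≤ k) (pj pk : Polynomial ℝ)
    (hdegj : pj.natDegree ≤ j)
    (hjk' : j = k → pj = pk)
    (hpk : (X:Polynomial ℝ)^m * pk
      = C (1/(k.factorial:ℝ)) * derivative^[k] ((X:Polynomial ℝ)^(m+k) * (X-1)^k)) :
    ∫ x in (0:ℝ)..1, x^m * (pj.eval x * pk.eval x)
      = if j = k then 1/((m:ℝ)+2*k+1) else 0 := by
  set g : Polynomial ℝ := (X:Polynomial ℝ)^(m+k) * (X-1)^k with hg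
  have hstep : ∫ x in (0:ℝ)..1, x^m * (pj.eval x * pk.eval x)
      = (1/(k.factorial:ℝ)) * ∫ x in (0:ℝ)..1, pj.eval x * (derivative^[k] g).eval x := by
    rw [← intervalIntegral.integral_const_mul]
    apply intervalIntegral.integral_congr
    intro x _
    have := congrArg (fun r => Polynomial.eval x r) hpk
    simp only [eval_mul, eval_pow, eval_X, eval_C] at this
    calc x^m * (pj.eval x * pk.eval x) = pj.eval x * (x ^ m * pk.eval x) := by ring
      _ = pj.eval x * ((1/(k.factorial:ℝ)) * (derivative^[k] g).eval x) := by rw [this]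
      _ = _ := by ring
  rw [hstep, iterIBP k g (fun i hi => vanish0 m k i (by omega))
    (fun i hi => vanish1 m k i hi) pj]
  rcases eq_or_ne j k with heq | hne
  · have hpj : pj = pk := hjk' heq
    have hdegk : pk.natDegree ≤ k := by rw [← hpj]; omega
    rw [hpj, iterDerivP k pk hdegk, coeffP m k pk hpk]
    have hgeval : ∫ x in (0:ℝ)..1,
        (C ((k.factorial:ℝ) * (((m+2*k).descFactorial k : ℝ)/k.factorial))).eval x * g.eval x
        = ((k.factorial:ℝ) * (((m+2*k).descFactorial k : ℝ)/k.factorial))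
            * ∫ x in (0:ℝ)..1, x^(m+k) * (x-1)^k := by
      rw [← intervalIntegral.integral_const_mul]
      apply intervalIntegral.integral_congr
      intro x _
      rw [hg]
      simp only [eval_mul, eval_C, eval_pow, eval_X, eval_sub, eval_one]
    rw [hgeval, betaInt (m+k) k]
    rw [if_pos heq]
    have hfac : ((m+k).factorial : ℝ) * ((m+2*k).descFactorial k : ℝ)
        = ((m+2*k).factorial : ℝ) := by
      have h := Nat.factorial_mul_descFactorial (show k ≤ m+2*k by omega)
      have h2 : m + 2*k - k = m + k := by omega
      rw [h2] at h
      exact_mod_cast congrArg (fun t : ℕ => (t:ℝ)) h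
    have hidx : m + k + k + 1 = m + 2*k + 1 := by omega
    rw [hidx, Nat.factorial_succ (m + 2*k)]
    have hk0 : (k.factorial : ℝ) ≠ 0 := by positivity
    have hmk0 : ((m+2*k).factorial : ℝ) ≠ 0 := by positivity
    have hm1 : ((m:ℝ) + 2*k + 1) ≠ 0 := by positivity
    have hcast : (((m + 2*k + 1 : ℕ)) : ℝ) = (m:ℝ) + 2*k + 1 := by push_cast; ring
    have hneg : ((-1:ℝ)) ^ (k*2) = 1 := by rw [mul_comm, pow_mul]; norm_num
    field_simp
    have hneg2 : ((-1:ℝ)^k)^2 = 1 := by rw [← pow_mul, hneg]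
    rw [hneg2]
    push_cast
    rw [← hfac]
    ring
  · rw [Polynomial.iterate_derivative_eq_zero (lt_of_le_of_lt hdegj (by omega))]
    simp [hne]


lemma compAffine (r : Polynomial ℝ) (a b : ℝ) (hab : a < b) :
    ∫ s in a..b, r.eval ((s - a)/(b-a)) = (b - a) * ∫ x in (0:ℝ)..1, r.eval x := by
  have hc : b - a ≠ 0 := sub_ne_zero.mpr hab.ne'
  have h1 : ∫ s in a..b, (fun y => r.eval (y/(b-a))) (s - a)
      = ∫ y in (a-a)..(b-a), r.eval (y/(b-a)) :=
    intervalIntegral.integral_comp_sub_right (fun y => r.eval (y/(b-a))) a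
  have h2 : ∫ y in (a-a)..(b-a), (fun x => r.eval x) (y/(b-a))
      = (b-a) • ∫ x in ((a-a)/(b-a))..((b-a)/(b-a)), r.eval x :=
    intervalIntegral.integral_comp_div (fun x => r.eval x) hc
  simp only [sub_self, zero_div, div_self hc, smul_eq_mul] at h1 h2
  rw [h1, h2]

end Stmt13Aux

open Stmt13Aux Finset

/-- Lemma 3 of the paper (integral inequality for derivatives): with
`q_{m,m+j}(x) = x^m P_{m,j}(x)` and
`θ_{m,j} = f(b) − q_{m,m+j}(0) f(a) − (1/(b-a)) ∫_a^b q'_{m,m+j}((s-a)/(b-a)) f(s) ds`,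
`∫_a^b ((s-a)/(b-a))^m f'(s)ᵀ W f'(s) ds
  ≥ (1/(b-a)) ∑_{j=0}^ν (m+2j+1) θ_{m,j}ᵀ W θ_{m,j}`. -/
theorem stmt_13 (P : ℕ → ℕ → Polynomial ℝ)
    (hP0 : ∀ m, P m 0 = 1)
    (hP : ∀ m n, 1 ≤ n →
      (X : Polynomial ℝ) ^ m * P m n
        = C (1 / (n.factorial : ℝ)) *
            derivative^[n] (X ^ (m + n) * (X - 1) ^ n))
    (n : ℕ) (hn : 1 ≤ n)
    (W : Matrix (Fin n) (Fin n) ℝ) (hWsym : W.IsSymm)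
    (hWpsd : ∀ v : Fin n → ℝ, 0 ≤ v ⬝ᵥ W.mulVec v)
    (m ν : ℕ) (a b : ℝ) (hab : a < b)
    (f f' : ℝ → Fin n → ℝ)
    (hf : ∀ s ∈ Set.Icc a b, HasDerivAt f (f' s) s)
    (hf' : ContinuousOn f' (Set.Icc a b))
    (q : ℕ → Polynomial ℝ) (hq : ∀ j, q j = (X : Polynomial ℝ) ^ m * P m j)
    (θ : ℕ → Fin n → ℝ)
    (hθ : ∀ j i, θ j i =
      f b i - (q j).eval 0 * f a i
        - (1 / (b - a)) *
            ∫ s in a..b, (q j).derivative.eval ((s - a) / (b - a)) * f s i) :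
    (1 / (b - a)) * ∑ j ∈ Finset.range (ν + 1),
        ((m : ℝ) + 2 * j + 1) * (θ j ⬝ᵥ W.mulVec (θ j))
      ≤ ∫ s in a..b, ((s - a) / (b - a)) ^ m * (f' s ⬝ᵥ W.mulVec (f' s)) := by
  have hab' : a ≤ b := hab.le
  have hba : (0:ℝ) < b - a := sub_pos.mpr hab
  have hba' : b - a ≠ 0 := hba.ne'
  set u : ℝ → ℝ := fun s => (s - a)/(b - a) with hu
  set d : ℕ → ℝ := fun j => (m:ℝ) + 2*j + 1 with hd
  set c : ℕ → ℝ := fun j => d j / (b - a) with hc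
  set B : (Fin n → ℝ) → (Fin n → ℝ) → ℝ := fun v w => v ⬝ᵥ W.mulVec w with hB
  -- basic polynomial facts
  have hdeg : ∀ k, (P m k).natDegree ≤ k := by
    intro k
    rcases Nat.eq_zero_or_pos k with rfl | hk
    · simp [hP0]
    · exact degP m k (P m k) (hP m k hk)
  have hP1 : ∀ k, (P m k).eval 1 = 1 := by
    intro k
    rcases Nat.eq_zero_or_pos k with rfl | hk
    · simp [hP0]
    · exact evalP1 m k (P m k) (hP m k hk)
  have horth : ∀ j k, ∫ x in (0:ℝ)..1, x^m * ((P m j).eval x * (P m k).eval x)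
      = if j = k then 1/((m:ℝ)+2*k+1) else 0 := by
    have base : ∀ j k, j ≤ k → ∫ x in (0:ℝ)..1, x^m * ((P m j).eval x * (P m k).eval x)
        = if j = k then 1/((m:ℝ)+2*k+1) else 0 := by
      intro j k hjk
      rcases Nat.eq_zero_or_pos k with rfl | hk
      · have hj0 : j = 0 := Nat.le_zero.mp hjk
        subst hj0
        simp only [hP0, eval_one, mul_one, if_pos rfl]
        rw [integral_pow]
        norm_num
      · exact orthPP m j k hjk (P m j) (P m k) (hdeg j) (fun h => by rw [h]) (hP m k hk)
    intro j k
    rcases le_total j k with hjk | hkj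
    · exact base j k hjk
    · have h := base k j hkj
      have hsw : ∫ x in (0:ℝ)..1, x^m * ((P m j).eval x * (P m k).eval x)
          = ∫ x in (0:ℝ)..1, x^m * ((P m k).eval x * (P m j).eval x) := by
        apply intervalIntegral.integral_congr
        intro x _
        ring
      rw [hsw, h]
      by_cases h' : j = k
      · subst h'
        simp
      · simp [h', Ne.symm h']
  -- symmetry of B
  have hBsymm : ∀ v w, B v w = B w v := by
    intro v w
    rw [hB]
    simp only
    rw [dotProduct_mulVec, ← vecMul_transpose, hWsym.eq, dotProduct_comm]
  -- left linearity over sums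
  have hSx : ∀ (e : ℕ → ℝ) (x : Fin n → ℝ),
      B (∑ j ∈ range (ν+1), e j • θ j) x
        = ∑ j ∈ range (ν+1), e j * B (θ j) x := by
    intro e x
    rw [hB]
    simp only [dotProduct, Finset.sum_apply, Pi.smul_apply, smul_eq_mul,
      Finset.sum_mul, Finset.mul_sum]
    rw [Finset.sum_comm]
    exact Finset.sum_congr rfl fun j _ => Finset.sum_congr rfl fun i _ => by ring
  -- continuity facts
  have hfc : ContinuousOn f (Set.Icc a b) :=
    fun s hs => (hf s hs).continuousAt.continuousWithinAt
  have hfi : ∀ i, ∀ s ∈ Set.Icc a b, HasDerivAt (fun t => f t i) (f' s i) s :=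
    fun i s hs => (hasDerivAt_pi.mp (hf s hs)) i
  have hf'i : ∀ i, ContinuousOn (fun s => f' s i) (Set.Icc a b) :=
    fun i => (continuous_apply i).comp_continuousOn hf'
  -- theta as integral against f'
  have htheta : ∀ j i, θ j i = ∫ s in a..b, (q j).eval (u s) * f' s i := by
    intro j i
    have hq1 : (q j).eval 1 = 1 := by rw [hq j]; simp [hP1 j]
    have hinner : ∀ s : ℝ, HasDerivAt (fun t => (t - a)/(b-a)) (1/(b-a)) s := by
      intro s
      simpa using ((hasDerivAt_id s).sub_const a).div_const (b-a)
    have hU : ∀ s : ℝ, HasDerivAt (fun t => (q j).eval (u t))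
        ((derivative (q j)).eval (u s) * (1/(b-a))) s := by
      intro s
      have h := ((q j).hasDerivAt (u s)).comp s (hinner s)
      exact h
    have hUc : Continuous fun s => (derivative (q j)).eval (u s) * (1/(b-a)) := by
      apply Continuous.mul ?_ continuous_const
      exact (derivative (q j)).continuous.comp
        ((continuous_id.sub continuous_const).div_const _)
    have hvint : IntervalIntegrable (fun s => f' s i) MeasureTheory.volume a b := by
      have h : ContinuousOn (fun s => f' s i) (Set.uIcc a b) := by
        rw [Set.uIcc_of_le hab']; exact hf'i i
      exact h.intervalIntegrable
    have hIBP := integral_mul_deriv_eq_deriv_mul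
      (u := fun s => (q j).eval (u s)) (v := fun s => f s i)
      (u' := fun s => (derivative (q j)).eval (u s) * (1/(b-a)))
      (v' := fun s => f' s i)
      (fun x _ => hU x)
      (fun x hx => hfi i x (by rwa [Set.uIcc_of_le hab'] at hx))
      (hUc.intervalIntegrable a b) hvint
    have hre : ∫ s in a..b, ((derivative (q j)).eval (u s) * (1/(b-a))) * f s i
        = (1/(b-a)) * ∫ s in a..b, (derivative (q j)).eval (u s) * f s i := by
      rw [← intervalIntegral.integral_const_mul]
      apply intervalIntegral.integral_congr
      intro s _
      ring
    rw [hθ j i, hIBP, hre]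
    simp only [hu, sub_self, zero_div, div_self hba', hq1]
    ring
  -- more continuity
  have hucont : Continuous u := by
    rw [hu]; exact (continuous_id.sub continuous_const).div_const _
  have hpoly : ∀ r : Polynomial ℝ, Continuous fun s => r.eval (u s) :=
    fun r => r.continuous.comp hucont
  have hII : ∀ {g : ℝ → ℝ}, ContinuousOn g (Set.Icc a b) →
      IntervalIntegrable g MeasureTheory.volume a b := by
    intro g hg
    apply ContinuousOn.intervalIntegrable
    rwa [Set.uIcc_of_le hab']
  have hBcont : ∀ (g h : ℝ → Fin n → ℝ), ContinuousOn g (Set.Icc a b) →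
      ContinuousOn h (Set.Icc a b) →
      ContinuousOn (fun s => B (g s) (h s)) (Set.Icc a b) := by
    intro g h hg hh
    have heq : (fun s => B (g s) (h s)) = fun s => ∑ i, ∑ l, g s i * (W i l * h s l) := by
      funext s
      rw [hB]
      simp only [dotProduct, mulVec]
      exact Finset.sum_congr rfl fun i _ => by rw [Finset.mul_sum]
    rw [heq]
    apply continuousOn_finset_sum
    intro i _
    apply continuousOn_finset_sum
    intro l _
    exact ((continuous_apply i).comp_continuousOn hg).mul
      (continuousOn_const.mul ((continuous_apply l).comp_continuousOn hh))
  -- eval helpers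
  have hqeval : ∀ j x, (q j).eval x = x^m * (P m j).eval x := by
    intro j x
    rw [hq j, eval_mul, eval_pow, eval_X]
  have hpkeval : ∀ j k (x : ℝ),
      ((X^m * (P m j * P m k) : Polynomial ℝ)).eval x
        = x^m * ((P m j).eval x * (P m k).eval x) := by
    intro j k x
    rw [eval_mul, eval_pow, eval_X, eval_mul]
  -- bilinear expansion
  have hexpand : ∀ (v : Fin n → ℝ) (ee : ℕ → ℝ),
      B (v - ∑ j ∈ range (ν+1), ee j • θ j) (v - ∑ j ∈ range (ν+1), ee j • θ j)
        = B v v - 2 * ∑ j ∈ range (ν+1), ee j * B (θ j) v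
          + ∑ j ∈ range (ν+1), ∑ k ∈ range (ν+1), ee j * ee k * B (θ j) (θ k) := by
    intro v ee
    set S := ∑ j ∈ range (ν+1), ee j • θ j with hS
    have h1 : B (v - S) (v - S) = B v v - B S v - B v S + B S S := by
      rw [hB]
      simp only [sub_dotProduct, mulVec_sub, dotProduct_sub]
      ring
    have h2 : B S v = ∑ j ∈ range (ν+1), ee j * B (θ j) v := hSx ee v
    have h3 : B v S = ∑ j ∈ range (ν+1), ee j * B (θ j) v := by rw [hBsymm]; exact h2
    have h4 : B S S = ∑ j ∈ range (ν+1), ∑ k ∈ range (ν+1),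
        ee j * ee k * B (θ j) (θ k) := by
      rw [hS, hSx ee S]
      refine Finset.sum_congr rfl fun j _ => ?_
      rw [hBsymm (θ j) S, hS, hSx ee (θ j), Finset.mul_sum]
      refine Finset.sum_congr rfl fun k _ => ?_
      rw [hBsymm (θ k) (θ j)]
      ring
    rw [h1, h2, h3, h4]
    ring
  -- key integral identities
  have hIntG : ∀ j, (∫ s in a..b, (q j).eval (u s) * B (θ j) (f' s))
      = B (θ j) (θ j) := by
    intro j
    have heq : ∀ s : ℝ, (q j).eval (u s) * B (θ j) (f' s)
        = ∑ l, (θ j ᵥ* W) l * ((q j).eval (u s) * f' s l) := by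
      intro s
      rw [hB]
      simp only
      rw [dotProduct_mulVec]
      simp only [dotProduct, Finset.mul_sum]
      exact Finset.sum_congr rfl fun l _ => by ring
    rw [intervalIntegral.integral_congr (fun s _ => heq s)]
    rw [intervalIntegral.integral_finset_sum]
    · have hterm : ∀ l, (∫ s in a..b, (θ j ᵥ* W) l * ((q j).eval (u s) * f' s l))
          = (θ j ᵥ* W) l * θ j l := by
        intro l
        rw [intervalIntegral.integral_const_mul, ← htheta j l]
      rw [Finset.sum_congr rfl fun l _ => hterm l, hB]
      simp only
      rw [dotProduct_mulVec]
      rfl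
    · intro l _
      exact hII (continuousOn_const.mul
        (((hpoly (q j)).continuousOn).mul (hf'i l)))
  have hIntK : ∀ j k, (∫ s in a..b, ((X^m * (P m j * P m k) : Polynomial ℝ)).eval (u s))
      = (b-a) * (if j = k then 1/(d k) else 0) := by
    intro j k
    have h1 : (∫ s in a..b, ((X^m * (P m j * P m k) : Polynomial ℝ)).eval (u s))
        = (b-a) * ∫ x in (0:ℝ)..1, ((X^m * (P m j * P m k) : Polynomial ℝ)).eval x := by
      simp only [hu]
      exact compAffine _ a b hab
    rw [h1]
    have h2 : (∫ x in (0:ℝ)..1, ((X^m * (P m j * P m k) : Polynomial ℝ)).eval x)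
        = ∫ x in (0:ℝ)..1, x^m * ((P m j).eval x * (P m k).eval x) :=
      intervalIntegral.integral_congr (fun x _ => hpkeval j k x)
    rw [h2, horth j k, hd]
  -- the remainder function
  set rr : ℝ → Fin n → ℝ :=
    fun s => f' s - ∑ j ∈ range (ν+1), (c j * (P m j).eval (u s)) • θ j with hrr
  have hpt : ∀ s : ℝ, (u s)^m * B (rr s) (rr s)
      = (u s)^m * B (f' s) (f' s)
        - ∑ j ∈ range (ν+1), 2 * c j * ((q j).eval (u s) * B (θ j) (f' s))
        + ∑ j ∈ range (ν+1), ∑ k ∈ range (ν+1),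
            (c j * c k * B (θ j) (θ k)) * ((X^m * (P m j * P m k) : Polynomial ℝ)).eval (u s) := by
    intro s
    rw [hrr]
    simp only
    rw [hexpand (f' s) (fun j => c j * (P m j).eval (u s))]
    rw [mul_add, mul_sub]
    congr 1
    · congr 1
      rw [Finset.mul_sum, Finset.mul_sum]
      refine Finset.sum_congr rfl fun j _ => ?_
      rw [hqeval]
      ring
    · rw [Finset.mul_sum]
      refine Finset.sum_congr rfl fun j _ => ?_
      rw [Finset.mul_sum]
      refine Finset.sum_congr rfl fun k _ => ?_
      rw [hpkeval]
      ring
  -- integrability of the pieces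
  have hcontBthf : ∀ j, ContinuousOn (fun s => B (θ j) (f' s)) (Set.Icc a b) :=
    fun j => hBcont (fun _ => θ j) f' continuousOn_const hf'
  have hintG : ∀ j ∈ range (ν+1), IntervalIntegrable
      (fun s => 2 * c j * ((q j).eval (u s) * B (θ j) (f' s)))
      MeasureTheory.volume a b := by
    intro j _
    exact hII (continuousOn_const.mul (((hpoly (q j)).continuousOn).mul (hcontBthf j)))
  have hintK : ∀ j ∈ range (ν+1), IntervalIntegrable
      (fun s => ∑ k ∈ range (ν+1),
        (c j * c k * B (θ j) (θ k)) * ((X^m * (P m j * P m k) : Polynomial ℝ)).eval (u s))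
      MeasureTheory.volume a b := by
    intro j _
    apply hII
    apply continuousOn_finset_sum
    intro k _
    exact continuousOn_const.mul ((hpoly _).continuousOn)
  have hintA : IntervalIntegrable (fun s => (u s)^m * B (f' s) (f' s))
      MeasureTheory.volume a b :=
    hII (((hucont.pow m).continuousOn).mul (hBcont f' f' hf' hf'))
  -- evaluate the expanded integral
  have hmain : (∫ s in a..b, (u s)^m * B (rr s) (rr s))
      = (∫ s in a..b, (u s)^m * B (f' s) (f' s))
        - ∑ j ∈ range (ν+1), c j * B (θ j) (θ j) := by
    have hintGsum : IntervalIntegrable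
        (fun s => ∑ j ∈ range (ν+1), 2 * c j * ((q j).eval (u s) * B (θ j) (f' s)))
        MeasureTheory.volume a b := by
      apply hII
      apply continuousOn_finset_sum
      intro j _
      exact continuousOn_const.mul (((hpoly (q j)).continuousOn).mul (hcontBthf j))
    have hintKsum : IntervalIntegrable
        (fun s => ∑ j ∈ range (ν+1), ∑ k ∈ range (ν+1),
          (c j * c k * B (θ j) (θ k)) * ((X^m * (P m j * P m k) : Polynomial ℝ)).eval (u s))
        MeasureTheory.volume a b := by
      apply hII
      apply continuousOn_finset_sum
      intro j _
      apply continuousOn_finset_sum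
      intro k _
      exact continuousOn_const.mul ((hpoly _).continuousOn)
    rw [intervalIntegral.integral_congr (fun s _ => hpt s)]
    rw [intervalIntegral.integral_add (hintA.sub hintGsum) hintKsum]
    rw [intervalIntegral.integral_sub hintA hintGsum]
    rw [intervalIntegral.integral_finset_sum hintG,
      intervalIntegral.integral_finset_sum hintK]
    have hG : ∀ j ∈ range (ν+1),
        (∫ s in a..b, 2 * c j * ((q j).eval (u s) * B (θ j) (f' s)))
          = 2 * c j * B (θ j) (θ j) := by
      intro j _
      rw [intervalIntegral.integral_const_mul, hIntG j]
    have hK : ∀ j ∈ range (ν+1),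
        (∫ s in a..b, ∑ k ∈ range (ν+1),
          (c j * c k * B (θ j) (θ k)) * ((X^m * (P m j * P m k) : Polynomial ℝ)).eval (u s))
          = c j * B (θ j) (θ j) := by
      intro j hj
      rw [intervalIntegral.integral_finset_sum
        (f := fun k s => (c j * c k * B (θ j) (θ k))
          * ((X^m * (P m j * P m k) : Polynomial ℝ)).eval (u s)) (fun k _ =>
        hII (continuousOn_const.mul ((hpoly _).continuousOn)))]
      have hterm : ∀ k ∈ range (ν+1),
          (∫ s in a..b, (c j * c k * B (θ j) (θ k))
              * ((X^m * (P m j * P m k) : Polynomial ℝ)).eval (u s))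
            = if j = k then c j * B (θ j) (θ j) else 0 := by
        intro k _
        rw [intervalIntegral.integral_const_mul, hIntK j k]
        by_cases h : j = k
        · subst h
          rw [if_pos rfl, if_pos rfl]
          rw [hc]
          simp only
          rw [hd]
          simp only
          field_simp
        · rw [if_neg h, if_neg h]
          ring
      rw [Finset.sum_congr rfl hterm, Finset.sum_ite_eq]
      rw [if_pos hj]
    rw [Finset.sum_congr rfl hG, Finset.sum_congr rfl hK]
    have hS : ∑ j ∈ range (ν+1), 2 * c j * B (θ j) (θ j)
        = (∑ j ∈ range (ν+1), c j * B (θ j) (θ j))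
          + ∑ j ∈ range (ν+1), c j * B (θ j) (θ j) := by
      rw [← Finset.sum_add_distrib]
      exact Finset.sum_congr rfl fun j _ => by ring
    rw [hS]
    ring
  have hnonneg : 0 ≤ ∫ s in a..b, (u s)^m * B (rr s) (rr s) := by
    apply intervalIntegral.integral_nonneg hab'
    intro s hs
    have h1 : 0 ≤ u s := div_nonneg (sub_nonneg.mpr hs.1) hba.le
    exact mul_nonneg (pow_nonneg h1 m) (hWpsd _)
  have hfinal : ∑ j ∈ range (ν+1), c j * B (θ j) (θ j)
      ≤ ∫ s in a..b, (u s)^m * B (f' s) (f' s) := by linarith [hmain ▸ hnonneg]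
  have hgoalL : (1 / (b - a)) * ∑ j ∈ Finset.range (ν + 1),
      ((m : ℝ) + 2 * j + 1) * (θ j ⬝ᵥ W.mulVec (θ j))
        = ∑ j ∈ range (ν+1), c j * B (θ j) (θ j) := by
    rw [Finset.mul_sum]
    refine Finset.sum_congr rfl fun j _ => ?_
    rw [hc]
    simp only
    rw [hd, hB]
    simp only
    ring
  rw [hgoalL]
  exact hfinal
end

section
/- Let n ≥ 1 and let W be a symmetric positive semidefinite real n×n matrix, let a < b be real numbers and f : [a,b] → ℝ^n be continuously differentiable. Set θ_0 = f(b) − f(a) and θ_1 = f(b) + f(a) − (2/(b-a)) ∫_a^b f(s) ds. Then ∫_a^b f'(s)ᵀ W f'(s) ds ≥ (1/(b-a)) · θ_0ᵀ W θ_0 + (3/(b-a)) · θ_1ᵀ W θ_1. -/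
open Matrix MeasureTheory intervalIntegral
set_option maxHeartbeats 1000000
set_option linter.unusedVariables false

/-- Wirtinger-based integral inequality (case m = 0, ν = 1 of Lemma 3): with
`θ₀ = f(b) − f(a)` and `θ₁ = f(b) + f(a) − (2/(b-a)) ∫_a^b f(s) ds`,
`∫_a^b f'(s)ᵀ W f'(s) ds ≥ (1/(b-a)) θ₀ᵀ W θ₀ + (3/(b-a)) θ₁ᵀ W θ₁`. -/
theorem stmt_14 (n : ℕ) (hn : 1 ≤ n)
    (W : Matrix (Fin n) (Fin n) ℝ) (hWsym : W.IsSymm)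
    (hWpsd : ∀ v : Fin n → ℝ, 0 ≤ v ⬝ᵥ W.mulVec v)
    (a b : ℝ) (hab : a < b)
    (f f' : ℝ → Fin n → ℝ)
    (hf : ∀ s ∈ Set.Icc a b, HasDerivAt f (f' s) s)
    (hf' : ContinuousOn f' (Set.Icc a b))
    (θ₀ θ₁ : Fin n → ℝ)
    (hθ₀ : ∀ i, θ₀ i = f b i - f a i)
    (hθ₁ : ∀ i, θ₁ i = f b i + f a i - (2 / (b - a)) * ∫ s in a..b, f s i) :
    (1 / (b - a)) * (θ₀ ⬝ᵥ W.mulVec θ₀) + (3 / (b - a)) * (θ₁ ⬝ᵥ W.mulVec θ₁)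
      ≤ ∫ s in a..b, f' s ⬝ᵥ W.mulVec (f' s) := by
  have hab' : a ≤ b := hab.le
  have hL : (0:ℝ) < b - a := by linarith
  set L : ℝ := b - a with hLdef
  have hL0 : L ≠ 0 := hL.ne'
  have huIcc : Set.uIcc a b = Set.Icc a b := Set.uIcc_of_le hab'
  -- symmetry of the quadratic form
  have qsym : ∀ u v : Fin n → ℝ, u ⬝ᵥ W *ᵥ v = v ⬝ᵥ W *ᵥ u := by
    intro u v
    rw [dotProduct_mulVec, ← vecMul_transpose, hWsym.eq, dotProduct_comm]
  -- componentwise facts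
  have hfi : ∀ i, ∀ s ∈ Set.Icc a b, HasDerivAt (fun t => f t i) (f' s i) s :=
    fun i s hs => hasDerivAt_pi.1 (hf s hs) i
  have hf'i : ∀ i, ContinuousOn (fun s => f' s i) (Set.Icc a b) :=
    fun i => (continuous_apply i).comp_continuousOn hf'
  have hIf'i : ∀ i, IntervalIntegrable (fun s => f' s i) volume a b :=
    fun i => (huIcc ▸ hf'i i).intervalIntegrable
  have hfi_cont : ∀ i, ContinuousOn (fun s => f s i) (Set.Icc a b) := by
    intro i s hs
    exact ((hfi i s hs).continuousAt).continuousWithinAt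
  have hIfi : ∀ i, IntervalIntegrable (fun s => f s i) volume a b :=
    fun i => (huIcc ▸ hfi_cont i).intervalIntegrable
  -- the polynomial p
  set p : ℝ → ℝ := fun s => (2*s - a - b) / L with hpdef
  have hpc : Continuous p := by fun_prop
  have hp : ∀ s, HasDerivAt p (2 / L) s := by
    intro s
    have h := ((((hasDerivAt_id s).const_mul 2).sub_const a).sub_const b).div_const L
    simpa [hpdef, mul_one] using h
  have hpa : p a = -1 := by
    simp only [hpdef]; field_simp; ring
  have hpb : p b = 1 := by
    simp only [hpdef]; field_simp; ring
  -- componentwise integral identities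
  have hint0 : ∀ i, ∫ s in a..b, f' s i = θ₀ i := by
    intro i
    rw [hθ₀ i]
    exact integral_eq_sub_of_hasDerivAt (fun s hs => hfi i s (huIcc ▸ hs)) (hIf'i i)
  have hint1 : ∀ i, ∫ s in a..b, p s * f' s i = θ₁ i := by
    intro i
    have h := integral_mul_deriv_eq_deriv_mul (u := p) (u' := fun _ => 2/L)
      (v := fun t => f t i) (v' := fun s => f' s i)
      (fun s _ => hp s) (fun s hs => hfi i s (huIcc ▸ hs))
      intervalIntegrable_const (hIf'i i)
    rw [h, hpa, hpb, hθ₁ i, intervalIntegral.integral_const_mul]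
    ring
  -- abbreviations
  set c₀ : ℝ := 1 / L with hc₀
  set c₁ : ℝ := 3 / L with hc₁
  set K0 : ℝ := θ₀ ⬝ᵥ W *ᵥ θ₀ with hK0
  set K1 : ℝ := θ₁ ⬝ᵥ W *ᵥ θ₁ with hK1
  set K01 : ℝ := θ₀ ⬝ᵥ W *ᵥ θ₁ with hK01
  set A : ℝ → ℝ := fun s => θ₀ ⬝ᵥ W *ᵥ f' s with hAdef
  set B : ℝ → ℝ := fun s => θ₁ ⬝ᵥ W *ᵥ f' s with hBdef
  set F : ℝ → ℝ := fun s => f' s ⬝ᵥ W *ᵥ f' s with hFdef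
  -- rewriting A, B, F as sums
  have hAsum : A = fun s => ∑ i, (θ₀ ᵥ* W) i * f' s i := by
    funext s; simp only [hAdef, dotProduct_mulVec]; rfl
  have hBsum : B = fun s => ∑ i, (θ₁ ᵥ* W) i * f' s i := by
    funext s; simp only [hBdef, dotProduct_mulVec]; rfl
  have hFsum : F = fun s => ∑ i, f' s i * ∑ j, W i j * f' s j := by
    funext s; rfl
  have hcA : ContinuousOn A (Set.Icc a b) := by
    rw [hAsum]; exact continuousOn_finset_sum _ fun i _ => continuousOn_const.mul (hf'i i)
  have hcB : ContinuousOn B (Set.Icc a b) := by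
    rw [hBsum]; exact continuousOn_finset_sum _ fun i _ => continuousOn_const.mul (hf'i i)
  have hcF : ContinuousOn F (Set.Icc a b) := by
    rw [hFsum]
    exact continuousOn_finset_sum _ fun i _ =>
      (hf'i i).mul (continuousOn_finset_sum _ fun j _ => continuousOn_const.mul (hf'i j))
  have hIA : IntervalIntegrable A volume a b := (huIcc ▸ hcA).intervalIntegrable
  have hIB : IntervalIntegrable (fun s => p s * B s) volume a b :=
    (huIcc ▸ (hpc.continuousOn.mul hcB)).intervalIntegrable
  have hIF : IntervalIntegrable F volume a b := (huIcc ▸ hcF).intervalIntegrable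
  -- integral of A
  have hA : ∫ s in a..b, A s = K0 := by
    rw [hAsum]
    rw [integral_finset_sum (fun i _ => (hIf'i i).const_mul _)]
    simp_rw [intervalIntegral.integral_const_mul, hint0]
    rw [hK0, dotProduct_mulVec]; rfl
  -- integral of p * B
  have hB : ∫ s in a..b, p s * B s = K1 := by
    have h1 : (fun s => p s * B s) = fun s => ∑ i, (θ₁ ᵥ* W) i * (p s * f' s i) := by
      funext s
      simp only [hBsum, Finset.mul_sum]
      exact Finset.sum_congr rfl fun i _ => by ring
    have hInt : ∀ i : Fin n, IntervalIntegrable (fun s => (θ₁ ᵥ* W) i * (p s * f' s i)) volume a b := by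
      intro i
      apply ContinuousOn.intervalIntegrable
      rw [huIcc]
      exact continuousOn_const.mul (hpc.continuousOn.mul (hf'i i))
    rw [h1, integral_finset_sum (fun i _ => hInt i)]
    simp_rw [intervalIntegral.integral_const_mul, hint1]
    rw [hK1, dotProduct_mulVec]; rfl
  -- integrals of p and p²
  have hip : ∫ s in a..b, p s = 0 := by
    have hP : ∀ s ∈ Set.uIcc a b, HasDerivAt (fun t => (t-a)*(t-b)/L) (p s) s := by
      intro s _
      have h := (((hasDerivAt_id s).sub_const a).mul ((hasDerivAt_id s).sub_const b)).div_const L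
      refine h.congr_deriv ?_
      simp [hpdef]; ring
    rw [integral_eq_sub_of_hasDerivAt hP (hpc.intervalIntegrable _ _)]
    simp
  have hip2 : ∫ s in a..b, (p s)^2 = L/3 := by
    have hP : ∀ s ∈ Set.uIcc a b,
        HasDerivAt (fun t => (2*t-a-b)^3/(6*L^2)) ((p s)^2) s := by
      intro s _
      have h := ((((hasDerivAt_id s).const_mul 2).sub_const a).sub_const b).pow 3 |>.div_const (6*L^2)
      refine h.congr_deriv ?_
      simp only [hpdef, id]
      field_simp
      ring
    rw [integral_eq_sub_of_hasDerivAt hP ((hpc.pow 2).intervalIntegrable _ _)]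
    have h1 : (2*b-a-b) = L := by rw [hLdef]; ring
    have h2 : (2*a-a-b) = -L := by rw [hLdef]; ring
    rw [h1, h2]
    field_simp
    ring
  -- the quadratic expansion
  set e : ℝ → Fin n → ℝ := fun s => f' s - (c₀ • θ₀ + (c₁ * p s) • θ₁) with hedef
  have hexp : ∀ s, e s ⬝ᵥ W *ᵥ e s
      = F s - (2*c₀*A s + 2*c₁*(p s * B s))
        + (c₀^2*K0 + 2*c₀*c₁*K01*(p s) + c₁^2*K1*(p s)^2) := by
    intro s
    have h1 : f' s ⬝ᵥ W *ᵥ θ₀ = A s := qsym _ _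
    have h2 : f' s ⬝ᵥ W *ᵥ θ₁ = B s := qsym _ _
    have h3 : θ₁ ⬝ᵥ W *ᵥ θ₀ = K01 := qsym _ _
    simp only [hedef, sub_dotProduct, dotProduct_sub, add_dotProduct, dotProduct_add,
      Matrix.mulVec_sub, Matrix.mulVec_add, Matrix.mulVec_smul, smul_dotProduct,
      dotProduct_smul, smul_eq_mul]
    rw [h1, h2, h3]
    simp only [hAdef, hBdef, hFdef, hK0, hK1, hK01]
    ring
  -- nonnegativity
  have hQ : (0:ℝ) ≤ ∫ s in a..b, e s ⬝ᵥ W *ᵥ e s :=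
    intervalIntegral.integral_nonneg hab' (fun u _ => hWpsd _)
  -- split the integral
  have hsplit : ∫ s in a..b, e s ⬝ᵥ W *ᵥ e s
      = (∫ s in a..b, F s) - (2*c₀*K0 + 2*c₁*K1)
        + (c₀^2*K0*L + c₁^2*K1*(L/3)) := by
    rw [intervalIntegral.integral_congr (g := fun s =>
      F s - (2*c₀*A s + 2*c₁*(p s * B s))
        + (c₀^2*K0 + 2*c₀*c₁*K01*(p s) + c₁^2*K1*(p s)^2)) (fun s _ => hexp s)]
    have i1 : IntervalIntegrable (fun s => 2*c₀*A s) volume a b := hIA.const_mul _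
    have i2 : IntervalIntegrable (fun s => 2*c₁*(p s * B s)) volume a b := hIB.const_mul _
    have i3 : IntervalIntegrable (fun s => F s - (2*c₀*A s + 2*c₁*(p s * B s))) volume a b :=
      hIF.sub (i1.add i2)
    have i4 : IntervalIntegrable (fun s => (c₀^2*K0 : ℝ)) volume a b := intervalIntegrable_const
    have i5 : IntervalIntegrable (fun s => 2*c₀*c₁*K01*(p s)) volume a b :=
      (hpc.intervalIntegrable _ _).const_mul _
    have i6 : IntervalIntegrable (fun s => c₁^2*K1*(p s)^2) volume a b :=
      ((hpc.pow 2).intervalIntegrable _ _).const_mul _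
    have j1 : ∫ s in a..b, 2*c₀*A s = 2*c₀*K0 := by
      rw [intervalIntegral.integral_const_mul, hA]
    have j2 : ∫ s in a..b, 2*c₁*(p s * B s) = 2*c₁*K1 := by
      rw [intervalIntegral.integral_const_mul, hB]
    have j4 : ∫ _s in a..b, (c₀^2*K0 : ℝ) = c₀^2*K0*L := by
      rw [intervalIntegral.integral_const, smul_eq_mul]; ring
    have j5 : ∫ s in a..b, 2*c₀*c₁*K01*(p s) = 0 := by
      rw [intervalIntegral.integral_const_mul, hip, mul_zero]
    have j6 : ∫ s in a..b, c₁^2*K1*(p s)^2 = c₁^2*K1*(L/3) := by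
      rw [intervalIntegral.integral_const_mul, hip2]
    rw [intervalIntegral.integral_add i3 ((i4.add i5).add i6),
      intervalIntegral.integral_sub hIF (i1.add i2),
      intervalIntegral.integral_add i1 i2,
      intervalIntegral.integral_add (i4.add i5) i6,
      intervalIntegral.integral_add i4 i5,
      j1, j2, j4, j5, j6]
    ring
  rw [hsplit] at hQ
  have e1 : c₀^2*K0*L = (1/L)*K0 := by rw [hc₀]; field_simp
  have e2 : c₁^2*K1*(L/3) = (3/L)*K1 := by rw [hc₁]; field_simp
  have e3 : 2*c₀*K0 = (2/L)*K0 := by rw [hc₀]; ring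
  have e4 : 2*c₁*K1 = (6/L)*K1 := by rw [hc₁]; ring
  have h5 : (1/L)*K0 + (3/L)*K1 ≤ ∫ s in a..b, F s := by
    rw [e1, e2, e3, e4] at hQ
    have : (2/L)*K0 - (1/L)*K0 = (1/L)*K0 := by ring
    nlinarith [hQ]
  calc (1 / (b - a)) * (θ₀ ⬝ᵥ W.mulVec θ₀) + (3 / (b - a)) * (θ₁ ⬝ᵥ W.mulVec θ₁)
      = (1/L)*K0 + (3/L)*K1 := by rfl
    _ ≤ ∫ s in a..b, F s := h5
    _ = ∫ s in a..b, f' s ⬝ᵥ W.mulVec (f' s) := by rfl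
end

section
/- Let n ≥ 1 and let W be a symmetric positive semidefinite real n×n matrix, let m ≥ 0 be an integer, let a < b be real numbers and f : [a,b] → ℝ^n be continuous. Then ∫_a^b ((s-a)/(b-a))^m · f(s)ᵀ W f(s) ds ≥ ((m+1)/(b-a)) · (∫_a^b ((s-a)/(b-a))^m f(s) ds)ᵀ · W · (∫_a^b ((s-a)/(b-a))^m f(s) ds). -/
open Matrix MeasureTheory intervalIntegral

/-- Multiple-integral Jensen inequality (the one-term case ν = 0 of Lemma 2):
`∫_a^b ((s-a)/(b-a))^m f(s)ᵀ W f(s) ds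
  ≥ ((m+1)/(b-a)) (∫_a^b ((s-a)/(b-a))^m f)ᵀ W (∫_a^b ((s-a)/(b-a))^m f)`. -/
theorem stmt_15 (n : ℕ) (hn : 1 ≤ n)
    (W : Matrix (Fin n) (Fin n) ℝ) (hWsym : W.IsSymm)
    (hWpsd : ∀ v : Fin n → ℝ, 0 ≤ v ⬝ᵥ W.mulVec v)
    (m : ℕ) (a b : ℝ) (hab : a < b)
    (f : ℝ → Fin n → ℝ) (hf : ContinuousOn f (Set.Icc a b)) :
    ((m : ℝ) + 1) / (b - a) *
        ((fun i => ∫ s in a..b, ((s - a) / (b - a)) ^ m * f s i) ⬝ᵥ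
          W.mulVec (fun i => ∫ s in a..b, ((s - a) / (b - a)) ^ m * f s i))
      ≤ ∫ s in a..b, ((s - a) / (b - a)) ^ m * (f s ⬝ᵥ W.mulVec (f s)) := by
  have hba : (0:ℝ) < b - a := sub_pos.mpr hab
  set c : Fin n → ℝ := fun i => ∫ s in a..b, ((s - a) / (b - a)) ^ m * f s i with hcdef
  set lam : ℝ := ((m:ℝ) + 1) / (b - a) with hlamdef
  have hlam_pos : 0 < lam := by positivity
  have huIcc : Set.uIcc a b = Set.Icc a b := Set.uIcc_of_le hab.le
  -- symmetry of quadratic form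
  have hB : ∀ v u : Fin n → ℝ, v ⬝ᵥ W.mulVec u = u ⬝ᵥ W.mulVec v := fun v u => by
    rw [Matrix.dotProduct_mulVec, ← Matrix.mulVec_transpose, hWsym.eq, dotProduct_comm]
  -- continuity helper
  have hcontQ : ∀ u v : ℝ → Fin n → ℝ, ContinuousOn u (Set.Icc a b) →
      ContinuousOn v (Set.Icc a b) →
      ContinuousOn (fun s => u s ⬝ᵥ W.mulVec (v s)) (Set.Icc a b) := by
    intro u v hu hv
    simp only [dotProduct, Matrix.mulVec]
    fun_prop
  have hfc : ContinuousOn f (Set.Icc a b) := hf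
  have hgc : ContinuousOn (fun s => f s - lam • c) (Set.Icc a b) := by fun_prop
  have hcc : ContinuousOn (fun _ : ℝ => c) (Set.Icc a b) := continuousOn_const
  -- integrability helper
  have hInt : ∀ g : ℝ → ℝ, ContinuousOn g (Set.Icc a b) →
      IntervalIntegrable g volume a b := fun g hg => by
    exact (hg.mono (by rw [huIcc])).intervalIntegrable
  have hwcont : Continuous fun s : ℝ => ((s - a) / (b - a)) ^ m := by fun_prop
  have hI1 : IntervalIntegrable
      (fun s => ((s - a) / (b - a)) ^ m * (f s ⬝ᵥ W.mulVec (f s))) volume a b :=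
    hInt _ (hwcont.continuousOn.mul (hcontQ f f hfc hfc))
  have hI2 : IntervalIntegrable
      (fun s => ((s - a) / (b - a)) ^ m * (f s ⬝ᵥ W.mulVec c)) volume a b :=
    hInt _ (hwcont.continuousOn.mul (hcontQ f _ hfc hcc))
  have hIw : IntervalIntegrable (fun s : ℝ => ((s - a) / (b - a)) ^ m) volume a b :=
    hInt _ hwcont.continuousOn
  -- integral of the weight
  have hIwval : ∫ s in a..b, ((s - a) / (b - a)) ^ m = (b - a) / ((m:ℝ) + 1) := by
    simp only [div_pow]
    rw [intervalIntegral.integral_div]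
    rw [show (fun s : ℝ => (s - a) ^ m) = fun s => (fun x : ℝ => x ^ m) (s - a) from rfl,
      intervalIntegral.integral_comp_sub_right (fun x : ℝ => x ^ m) a, integral_pow]
    rw [sub_self]
    field_simp
    rw [pow_succ]
    ring
  -- the cross term
  have hI2val : ∫ s in a..b, ((s - a) / (b - a)) ^ m * (f s ⬝ᵥ W.mulVec c)
      = c ⬝ᵥ W.mulVec c := by
    have h1 : ∀ s : ℝ, ((s - a) / (b - a)) ^ m * (f s ⬝ᵥ W.mulVec c)
        = ∑ j, (((s - a) / (b - a)) ^ m * f s j) * W.mulVec c j := by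
      intro s
      simp only [dotProduct, Finset.mul_sum]
      exact Finset.sum_congr rfl fun j _ => by ring
    simp only [h1]
    rw [intervalIntegral.integral_finset_sum]
    · simp only [intervalIntegral.integral_mul_const]
      rfl
    · intro j _
      apply hInt
      apply ContinuousOn.mul _ continuousOn_const
      exact hwcont.continuousOn.mul ((continuous_apply j).comp_continuousOn hfc)
  -- nonnegativity of the completed square integral
  have h0 : 0 ≤ ∫ s in a..b, ((s - a) / (b - a)) ^ m *
      ((f s - lam • c) ⬝ᵥ W.mulVec (f s - lam • c)) := by
    apply intervalIntegral.integral_nonneg hab.le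
    intro s hs
    have hw0 : 0 ≤ ((s - a) / (b - a)) ^ m := by
      apply pow_nonneg
      exact div_nonneg (by linarith [hs.1]) hba.le
    exact mul_nonneg hw0 (hWpsd _)
  -- expand the square
  have hexp : ∫ s in a..b, ((s - a) / (b - a)) ^ m *
        ((f s - lam • c) ⬝ᵥ W.mulVec (f s - lam • c))
      = (∫ s in a..b, ((s - a) / (b - a)) ^ m * (f s ⬝ᵥ W.mulVec (f s)))
        - 2 * lam * (∫ s in a..b, ((s - a) / (b - a)) ^ m * (f s ⬝ᵥ W.mulVec c))
        + lam ^ 2 * (c ⬝ᵥ W.mulVec c) * ∫ s in a..b, ((s - a) / (b - a)) ^ m := by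
    have hpt : ∀ s : ℝ, ((s - a) / (b - a)) ^ m *
          ((f s - lam • c) ⬝ᵥ W.mulVec (f s - lam • c))
        = ((s - a) / (b - a)) ^ m * (f s ⬝ᵥ W.mulVec (f s))
          - 2 * lam * (((s - a) / (b - a)) ^ m * (f s ⬝ᵥ W.mulVec c))
          + lam ^ 2 * (c ⬝ᵥ W.mulVec c) * ((s - a) / (b - a)) ^ m := by
      intro s
      have hcross : c ⬝ᵥ W.mulVec (f s) = f s ⬝ᵥ W.mulVec c := hB c (f s)
      rw [sub_dotProduct, Matrix.mulVec_sub, dotProduct_sub, dotProduct_sub,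
        Matrix.mulVec_smul, smul_dotProduct, smul_dotProduct, dotProduct_smul,
        dotProduct_smul, hcross]
      simp only [smul_eq_mul]
      ring
    simp only [hpt]
    rw [intervalIntegral.integral_add, intervalIntegral.integral_sub hI1,
      intervalIntegral.integral_const_mul, intervalIntegral.integral_const_mul]
    · exact hI2.const_mul _
    · exact (hI1.sub (hI2.const_mul _))
    · exact hIw.const_mul _
  rw [hI2val, hIwval] at hexp
  have hlamIw : lam * ((b - a) / ((m:ℝ) + 1)) = 1 := by
    rw [hlamdef]; field_simp
  have hsq : lam ^ 2 * (c ⬝ᵥ W.mulVec c) * ((b - a) / ((m:ℝ) + 1))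
      = lam * (c ⬝ᵥ W.mulVec c) := by
    have : lam ^ 2 * (c ⬝ᵥ W.mulVec c) * ((b - a) / ((m:ℝ) + 1))
        = lam * (c ⬝ᵥ W.mulVec c) * (lam * ((b - a) / ((m:ℝ) + 1))) := by ring
    rw [this, hlamIw, mul_one]
  rw [hsq] at hexp
  linarith [h0, hexp]
end
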